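/- arXiv:1309.2128 — 6 statements merged into one kernel-verified Lean document; each statement's English description precedes it below -/
import Mathlib

section
/- Let A be a type in universe u, and suppose k : Ordinal.{u} → A and f : A → A → A → A satisfy: (i) f (k α) (k α) x = k 0 for every ordinal α and every x ∈ A, and (ii) f (k α) (k β) x = x for all distinct ordinals α ≠ β and every x ∈ A. Then every element x of A equals k 0; in particular A is a subsingleton. (This is the key step of the paper's Theorem 2.1: every small algebra of the displayed large equational theory is a singleton, so the theory has free small algebras although it does not have small free algebras.) -/
universe u

/-- Key step of Theorem 2.1: in any small algebra of the large theory with constants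
`k α` for every ordinal `α` and a ternary operation `f` satisfying
`f (k α) (k α) x = k 0` and `f (k α) (k β) x = x` for `α ≠ β`,
every element equals `k 0` (so the algebra is a singleton). -/
theorem every_element_eq_k_zero {A : Type u} (k : Ordinal.{u} → A) (f : A → A → A → A)
    (h1 : ∀ (α : Ordinal.{u}) (x : A), f (k α) (k α) x = k 0)
    (h2 : ∀ (α β : Ordinal.{u}), α ≠ β → ∀ x : A, f (k α) (k β) x = x) :
    (∀ x : A, x = k 0) ∧ Subsingleton A := by
  have hni : ¬ Function.Injective k := by
    intro hinj
    exact not_small_ordinal.{u} (small_of_injective hinj)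
  rw [Function.not_injective_iff] at hni
  obtain ⟨α, β, hk, hne⟩ := hni
  have key : ∀ x : A, x = k 0 := fun x => by
    rw [← h2 α β hne x, hk, h1]
  exact ⟨key, ⟨fun a b => (key a).trans (key b).symm⟩⟩
end

section
/- Let X be a set, (x_i)_{i∈ℕ} a sequence of elements of X, and (a_i)_{i∈ℕ} and (b_i)_{i∈ℕ} sequences of finite subsets of X. Then the sequence (a_i ∪ b_i)_{i∈ℕ} subsumes (x_i)_{i∈ℕ} if and only if at least one of (a_i)_{i∈ℕ} and (b_i)_{i∈ℕ} subsumes (x_i)_{i∈ℕ}. -/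
universe u

/-- A sequence `a` of finite subsets of `X` *subsumes* a sequence `x` of elements of `X`
if there is an infinite `M ⊆ ℕ` such that for all `i, j ∈ M` with `i < j`, `x i ∈ a j`. -/
def Subsumes {X : Type u} (a : ℕ → Finset X) (x : ℕ → X) : Prop :=
  ∃ M : Set ℕ, M.Infinite ∧ ∀ i ∈ M, ∀ j ∈ M, i < j → x i ∈ a j

open scoped Classical in
/-- Key combinatorial lemma: given a free ultrafilter `U`, a set `S ∈ U`, and for each `i ∈ S`
a set `T i ∈ U`, there is an infinite `N ⊆ S` such that `j ∈ T i` for all `i < j` in `N`. -/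
theorem key_lemma (U : Ultrafilter ℕ) (hU : (U : Filter ℕ) ≤ Filter.cofinite)
    (S : Set ℕ) (hS : S ∈ U) (T : ℕ → Set ℕ) (hT : ∀ i ∈ S, T i ∈ U) :
    ∃ N : Set ℕ, N.Infinite ∧ N ⊆ S ∧ ∀ i ∈ N, ∀ j ∈ N, i < j → j ∈ T i := by
  -- step: given a finite set s ⊆ S, find a new element
  have step : ∀ s : Finset ℕ, ↑s ⊆ S →
      ∃ m, m ∈ S ∧ (∀ l ∈ s, m ∈ T l) ∧ ∀ l ∈ s, l < m := by
    intro s hs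
    have h1 : (⋂ l ∈ (↑s : Set ℕ), T l) ∈ U :=
      (Filter.biInter_mem s.finite_toSet).mpr (fun l hl => hT l (hs hl))
    have h2 : {m : ℕ | ∀ l ∈ s, l < m} ∈ U := by
      apply hU
      rw [Filter.mem_cofinite]
      apply Set.Finite.subset (Set.finite_Iic (s.sup id))
      intro m hm
      simp only [Set.mem_compl_iff, Set.mem_setOf_eq, not_forall] at hm
      obtain ⟨l, hl, hlm⟩ := hm
      exact le_trans (not_lt.mp hlm) (Finset.le_sup (f := id) hl)
    have hW : S ∩ ((⋂ l ∈ (↑s : Set ℕ), T l) ∩ {m : ℕ | ∀ l ∈ s, l < m}) ∈ U :=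
      Filter.inter_mem hS (Filter.inter_mem h1 h2)
    obtain ⟨m, hm1, hm2, hm3⟩ := Filter.nonempty_of_mem hW
    exact ⟨m, hm1, fun l hl => by exact Set.mem_iInter₂.mp hm2 l hl, hm3⟩
  -- pick function
  let pick : Finset ℕ → ℕ := fun s =>
    if h : ↑s ⊆ S then (step s h).choose else 0
  have pick_spec : ∀ s : Finset ℕ, (h : ↑s ⊆ S) →
      pick s ∈ S ∧ (∀ l ∈ s, pick s ∈ T l) ∧ ∀ l ∈ s, l < pick s := by
    intro s h
    simp only [pick, dif_pos h]
    exact (step s h).choose_spec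
  -- iterate
  let F : ℕ → Finset ℕ := fun k => Nat.rec ∅ (fun _ s => insert (pick s) s) k
  have hF0 : F 0 = ∅ := rfl
  have hFsucc : ∀ k, F (k + 1) = insert (pick (F k)) (F k) := fun k => rfl
  have hFS : ∀ k, ∀ m ∈ F k, m ∈ S := by
    intro k
    induction k with
    | zero => simp [hF0]
    | succ k ih =>
      intro m hm
      rw [hFsucc] at hm
      rcases Finset.mem_insert.mp hm with rfl | hm
      · exact (pick_spec (F k) (fun l hl => ih l hl)).1
      · exact ih m hm
  let n : ℕ → ℕ := fun k => pick (F k)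
  have hn_mem : ∀ k, n k ∈ F (k + 1) := fun k => by
    rw [hFsucc]; exact Finset.mem_insert_self _ _
  have hFmono : ∀ k, F k ⊆ F (k + 1) := fun k => by
    rw [hFsucc]; exact Finset.subset_insert _ _
  have hFmono' : ∀ k k', k ≤ k' → F k ⊆ F k' := by
    intro k k' h
    induction h with
    | refl => exact Finset.Subset.refl _
    | step _ ih => exact Finset.Subset.trans ih (hFmono _)
  have hn_gt : ∀ k, ∀ l ∈ F k, l < n k := fun k => (pick_spec (F k) (fun l hl => hFS k l hl)).2.2
  have hn_T : ∀ k, ∀ l ∈ F k, n k ∈ T l := fun k => (pick_spec (F k) (fun l hl => hFS k l hl)).2.1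
  have hn_S : ∀ k, n k ∈ S := fun k => (pick_spec (F k) (fun l hl => hFS k l hl)).1
  have hmono : StrictMono n := strictMono_nat_of_lt_succ (fun k =>
    hn_gt (k + 1) (n k) (hn_mem k))
  refine ⟨Set.range n, Set.infinite_range_of_injective hmono.injective, ?_, ?_⟩
  · rintro _ ⟨k, rfl⟩; exact hn_S k
  · rintro _ ⟨k, rfl⟩ _ ⟨k', rfl⟩ hlt
    have hkk' : k < k' := hmono.lt_iff_lt.mp hlt
    have : n k ∈ F k' := hFmono' (k + 1) k' hkk' (hn_mem k)
    exact hn_T k' (n k) this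

open scoped Classical in
/-- Lemma 5.6: `(a_i ∪ b_i)` subsumes `(x_i)` iff `(a_i)` or `(b_i)` does. -/
theorem subsumes_union_iff {X : Type u} (x : ℕ → X) (a b : ℕ → Finset X) :
    Subsumes (fun i => a i ∪ b i) x ↔ Subsumes a x ∨ Subsumes b x := by
  constructor
  · rintro ⟨M, hMinf, hM⟩
    -- a free ultrafilter containing M
    have : (Filter.cofinite ⊓ Filter.principal M).NeBot :=
      hMinf.cofinite_inf_principal_neBot
    let U : Ultrafilter ℕ := Ultrafilter.of (Filter.cofinite ⊓ Filter.principal M)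
    have hUle : (U : Filter ℕ) ≤ Filter.cofinite ⊓ Filter.principal M :=
      Ultrafilter.of_le _
    have hUcof : (U : Filter ℕ) ≤ Filter.cofinite := le_trans hUle inf_le_left
    have hMU : M ∈ U := hUle (Filter.mem_inf_of_right (Filter.mem_principal_self M))
    -- the two colour sets for each i
    set Ta : ℕ → Set ℕ := fun i => {j | i < j ∧ x i ∈ a j} with hTa
    set Tb : ℕ → Set ℕ := fun i => {j | i < j ∧ x i ∈ b j} with hTb
    have hsplit : ∀ i ∈ M, Ta i ∈ U ∨ Tb i ∈ U := by
      intro i hi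
      have hsub : M ∩ {j | i < j} ⊆ Ta i ∪ Tb i := by
        intro j ⟨hjM, hij⟩
        have := hM i hi j hjM hij
        simp only [Finset.mem_union] at this
        rcases this with h | h
        · exact Or.inl ⟨hij, h⟩
        · exact Or.inr ⟨hij, h⟩
      have hgt : {j : ℕ | i < j} ∈ U := by
        apply hUcof
        rw [Filter.mem_cofinite]
        apply Set.Finite.subset (Set.finite_Iic i)
        intro j hj
        simpa using hj
      have : Ta i ∪ Tb i ∈ U := Filter.mem_of_superset (Filter.inter_mem hMU hgt) hsub
      exact (Ultrafilter.union_mem_iff).mp this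
    -- split M by which colour wins
    set P : Set ℕ := {i ∈ M | Ta i ∈ U} with hP
    have hMsplit : M ⊆ P ∪ (M \ P) := by
      intro i hi
      by_cases h : i ∈ P
      · exact Or.inl h
      · exact Or.inr ⟨hi, h⟩
    have : P ∪ (M \ P) ∈ U := Filter.mem_of_superset hMU hMsplit
    rcases Ultrafilter.union_mem_iff.mp this with hPU | hPU
    · -- colour a wins
      left
      obtain ⟨N, hNinf, hNS, hNpair⟩ := key_lemma U hUcof P hPU Ta (fun i hi => hi.2)
      exact ⟨N, hNinf, fun i hi j hj hij => (hNpair i hi j hj hij).2⟩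
    · -- colour b wins
      right
      have hTbU : ∀ i ∈ M \ P, Tb i ∈ U := by
        intro i hi
        rcases hsplit i hi.1 with h | h
        · exact absurd ⟨hi.1, h⟩ hi.2
        · exact h
      obtain ⟨N, hNinf, hNS, hNpair⟩ := key_lemma U hUcof (M \ P) hPU Tb hTbU
      exact ⟨N, hNinf, fun i hi j hj hij => (hNpair i hi j hj hij).2⟩
  · rintro (⟨M, hMinf, hM⟩ | ⟨M, hMinf, hM⟩)
    · exact ⟨M, hMinf, fun i hi j hj hij => Finset.mem_union_left _ (hM i hi j hj hij)⟩
    · exact ⟨M, hMinf, fun i hi j hj hij => Finset.mem_union_right _ (hM i hi j hj hij)⟩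
end

section
/- Let T and S be monads on the category Type u of sets. A tensor product of T and S (an initial commuting cocone) exists if and only if the forgetful functor from the category TAlg(T,S) of (T,S)-tensor algebras to Type u has a left adjoint. -/
open CategoryTheory

universe u

/-- A `(T,S)`-tensor algebra: a set with Eilenberg–Moore algebra structures for both
monads, satisfying the tensor law. -/
structure TensorAlg (T S : Monad (Type u)) where
  carrier : Type u
  α : T.obj carrier → carrier
  β : S.obj carrier → carrier
  α_unit : ∀ x : carrier, α (T.η.app carrier x) = x
  α_mul : ∀ m : T.obj (T.obj carrier), α (T.μ.app carrier m) = α (T.map (TypeCat.ofHom α) m)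
  β_unit : ∀ x : carrier, β (S.η.app carrier x) = x
  β_mul : ∀ m : S.obj (S.obj carrier), β (S.μ.app carrier m) = β (S.map (TypeCat.ofHom β) m)
  tensor_law : ∀ {Y Z : Type u} (p : T.obj Y) (q : S.obj Z) (f : Y × Z → carrier),
    α (T.map (TypeCat.ofHom fun y => β (S.map (TypeCat.ofHom fun z => f (y, z)) q)) p) =
      β (S.map (TypeCat.ofHom fun z => α (T.map (TypeCat.ofHom fun y => f (y, z)) p)) q)

/-- Morphisms of tensor algebras: maps homomorphic for both structures. -/
@[ext]
structure TensorAlgHom {T S : Monad (Type u)} (A B : TensorAlg T S) where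
  toFun : A.carrier → B.carrier
  map_α : ∀ m : T.obj A.carrier, toFun (A.α m) = B.α (T.map (TypeCat.ofHom toFun) m)
  map_β : ∀ m : S.obj A.carrier, toFun (A.β m) = B.β (S.map (TypeCat.ofHom toFun) m)

instance TensorAlg.instCategory {T S : Monad (Type u)} : Category (TensorAlg T S) where
  Hom A B := TensorAlgHom A B
  id A :=
    { toFun := id
      map_α := fun m => by
        show A.α m = A.α (T.map (𝟙 A.carrier) m)
        rw [FunctorToTypes.map_id_apply]
      map_β := fun m => by
        show A.β m = A.β (S.map (𝟙 A.carrier) m)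
        rw [FunctorToTypes.map_id_apply] }
  comp {A B C} f g :=
    { toFun := g.toFun ∘ f.toFun
      map_α := fun m => by
        show g.toFun (f.toFun (A.α m)) = C.α (T.map (TypeCat.ofHom (g.toFun ∘ f.toFun)) m)
        rw [f.map_α, g.map_α]
        congr 1
        exact (FunctorToTypes.map_comp_apply T.toFunctor (TypeCat.ofHom f.toFun) (TypeCat.ofHom g.toFun) m).symm
      map_β := fun m => by
        show g.toFun (f.toFun (A.β m)) = C.β (S.map (TypeCat.ofHom (g.toFun ∘ f.toFun)) m)
        rw [f.map_β, g.map_β]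
        congr 1
        exact (FunctorToTypes.map_comp_apply S.toFunctor (TypeCat.ofHom f.toFun) (TypeCat.ofHom g.toFun) m).symm }
  id_comp f := by apply TensorAlgHom.ext; rfl
  comp_id f := by apply TensorAlgHom.ext; rfl
  assoc f g h := by apply TensorAlgHom.ext; rfl

/-- The forgetful functor from `(T,S)`-tensor algebras to sets. -/
def forgetTAlg (T S : Monad (Type u)) : TensorAlg T S ⥤ Type u where
  obj A := A.carrier
  map f := TypeCat.ofHom (TensorAlgHom.toFun f)
  map_id _ := rfl
  map_comp _ _ := rfl

/-- A commuting cocone over monads `T` and `S`: a monad `R` with monad morphisms from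
`T` and `S` such that the images of any `T`-program and any `S`-program commute. -/
structure CommutingCocone (T S : Monad (Type u)) where
  R : Monad (Type u)
  τ : T ⟶ R
  σ : S ⟶ R
  commutes : ∀ {X Y : Type u} (p : T.obj X) (q : S.obj Y),
    R.μ.app (X × Y) (R.map (TypeCat.ofHom fun x => R.map (TypeCat.ofHom fun y => (x, y)) (σ.app Y q)) (τ.app X p)) =
      R.μ.app (X × Y) (R.map (TypeCat.ofHom fun y => R.map (TypeCat.ofHom fun x => (x, y)) (τ.app X p)) (σ.app Y q))

/-- A tensor product of `T` and `S` is an initial commuting cocone. -/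
def IsMonadTensorProduct {T S : Monad (Type u)} (c : CommutingCocone T S) : Prop :=
  ∀ c' : CommutingCocone T S, ∃! h : c.R ⟶ c'.R, c.τ ≫ h = c'.τ ∧ c.σ ≫ h = c'.σ

variable {M : Monad (Type u)}

lemma pmap_id {X : Type u} (x : M.obj X) : M.map (↾id) x = x :=
  FunctorToTypes.map_id_apply (F := M.toFunctor) x

lemma pmap_comp {X Y Z : Type u} (f : X → Y) (g : Y → Z) (x : M.obj X) :
    M.map (↾fun a => g (f a)) x = M.map (↾g) (M.map (↾f) x) :=
  FunctorToTypes.map_comp_apply M.toFunctor (↾f) (↾g) x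

lemma peta_nat {X Y : Type u} (f : X → Y) (x : X) :
    M.map (↾f) (M.η.app X x) = M.η.app Y (f x) :=
  (types_congr_hom (M.η.naturality (↾f)) x).symm

lemma pmu_nat {X Y : Type u} (f : X → Y) (m : M.obj (M.obj X)) :
    M.μ.app Y (M.map (M.map (↾f)) m) = M.map (↾f) (M.μ.app X m) :=
  types_congr_hom (M.μ.naturality (↾f)) m

lemma pmap_comp_hf {X Y Z : Type u} (f : X ⟶ Y) (g : Y → Z) (x : M.obj X) :
    M.map (↾fun a => g (f a)) x = M.map (↾g) (M.map f x) :=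
  FunctorToTypes.map_comp_apply M.toFunctor f (↾g) x

lemma pmap_comp_fh {X Y Z : Type u} (f : X → Y) (g : Y ⟶ Z) (x : M.obj X) :
    M.map (↾fun a => g (f a)) x = M.map g (M.map (↾f) x) :=
  FunctorToTypes.map_comp_apply M.toFunctor (↾f) g x

lemma pmap_comp_hh {X Y Z : Type u} (f : X ⟶ Y) (g : Y ⟶ Z) (x : M.obj X) :
    M.map (↾fun a => g (f a)) x = M.map g (M.map f x) :=
  FunctorToTypes.map_comp_apply M.toFunctor f g x

lemma peta_natH {X Y : Type u} (f : X ⟶ Y) (x : X) :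
    M.map f (M.η.app X x) = M.η.app Y (f x) :=
  (types_congr_hom (M.η.naturality f) x).symm

lemma pmu_natH {X Y : Type u} (f : X ⟶ Y) (m : M.obj (M.obj X)) :
    M.μ.app Y (M.map (M.map f) m) = M.map f (M.μ.app X m) :=
  types_congr_hom (M.μ.naturality f) m

lemma pleft_unit {X : Type u} (m : M.obj X) : M.μ.app X (M.η.app (M.obj X) m) = m :=
  types_congr_hom (M.left_unit X) m

lemma pright_unit {X : Type u} (m : M.obj X) : M.μ.app X (M.map (M.η.app X) m) = m :=
  types_congr_hom (M.right_unit X) m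

lemma passoc {X : Type u} (m : M.obj (M.obj (M.obj X))) :
    M.μ.app X (M.map (M.μ.app X) m) = M.μ.app X (M.μ.app (M.obj X) m) :=
  types_congr_hom (M.assoc X) m

variable {N : Monad (Type u)}

lemma phom_nat (f : M ⟶ N) {X Y : Type u} (g : X → Y) (m : M.obj X) :
    N.map (↾g) (f.app X m) = f.app Y (M.map (↾g) m) :=
  (types_congr_hom (f.1.naturality (↾g)) m).symm

lemma phom_natH (f : M ⟶ N) {X Y : Type u} (g : X ⟶ Y) (m : M.obj X) :
    N.map g (f.app X m) = f.app Y (M.map g m) :=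
  (types_congr_hom (f.1.naturality g) m).symm

lemma phom_eta (f : M ⟶ N) {X : Type u} (x : X) :
    f.app X (M.η.app X x) = N.η.app X x :=
  types_congr_hom (f.app_η X) x

lemma phom_mu (f : M ⟶ N) {X : Type u} (m : M.obj (M.obj X)) :
    f.app X (M.μ.app X m) = N.μ.app X (f.app (N.obj X) (M.map (f.app X) m)) :=
  types_congr_hom (f.app_μ X) m

/-- The continuation monad with answer type `A`. -/
def contMonad (A : Type u) : Monad (Type u) where
  obj X := (X → A) → A
  map f := ↾fun u k => u (fun x => k (f x))
  map_id _ := rfl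
  map_comp _ _ := rfl
  η := { app := fun _ => ↾fun x k => k x, naturality := fun _ _ _ => rfl }
  μ := { app := fun _ => ↾fun m k => m (fun u => u k), naturality := fun _ _ _ => rfl }
  assoc _ := rfl
  left_unit _ := rfl
  right_unit _ := rfl

/-- An Eilenberg–Moore algebra structure yields a monad morphism into the
continuation monad. -/
def algToCont (M : Monad (Type u)) {A : Type u} (θ : M.obj A → A)
    (hη : ∀ x, θ (M.η.app A x) = x)
    (hμ : ∀ m, θ (M.μ.app A m) = θ (M.map (↾θ) m)) : M ⟶ contMonad A where
  toNatTrans :=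
    { app := fun X => ↾fun p k => θ (M.map (↾k) p)
      naturality := fun X Y f => ConcreteCategory.hom_ext _ _ fun p => funext fun k => by
        show θ (M.map (↾k) (M.map f p)) = θ (M.map (↾fun x => k (f x)) p)
        rw [← pmap_comp_hf] }
  app_η X := ConcreteCategory.hom_ext _ _ fun x => funext fun k => by
    show θ (M.map (↾k) (M.η.app X x)) = k x
    rw [peta_nat, hη]
  app_μ X := ConcreteCategory.hom_ext _ _ fun m => funext fun k => by
    show θ (M.map (↾k) (M.μ.app X m)) = θ (M.map (↾fun u => u k) (M.map (↾fun p k' => θ (M.map (↾k') p)) m))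
    rw [← pmap_comp, ← pmu_nat, hμ, ← pmap_comp_hf]

lemma algToCont_app (M : Monad (Type u)) {A : Type u} (θ : M.obj A → A) (hη hμ)
    {X : Type u} (p : M.obj X) (k : X → A) :
    (algToCont M θ hη hμ).app X p k = θ (M.map (↾k) p) := rfl

/-- The algebra structure induced by a monad morphism into the continuation monad. -/
def contTheta {A : Type u} (h : M ⟶ contMonad A) : M.obj A → A :=
  fun r => h.app A r id

lemma contTheta_app {A : Type u} (h : M ⟶ contMonad A) {X : Type u} (r : M.obj X)
    (k : X → A) : h.app X r k = contTheta h (M.map (↾k) r) := by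
  have := phom_nat h k r
  have h2 : h.app A (M.map (↾k) r) = fun j => h.app X r (fun x => j (k x)) := this.symm
  show h.app X r k = h.app A (M.map (↾k) r) id
  rw [h2]
  rfl

lemma contTheta_eta {A : Type u} (h : M ⟶ contMonad A) (x : A) :
    contTheta h (M.η.app A x) = x := by
  show h.app A (M.η.app A x) id = x
  rw [phom_eta]
  rfl

lemma contTheta_mu {A : Type u} (h : M ⟶ contMonad A) (m : M.obj (M.obj A)) :
    contTheta h (M.μ.app A m) = contTheta h (M.map (↾contTheta h) m) := by
  show h.app A (M.μ.app A m) id = _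
  rw [phom_mu]
  show h.app ((contMonad A).obj A) (M.map (h.app A) m) (fun u => u id) = _
  rw [contTheta_app h (M.map (h.app A) m) (fun u => u id), ← pmap_comp_hf]
  rfl

section TensorAux
variable {T S : Monad (Type u)}

/-- The continuation-monad commuting cocone attached to a tensor algebra. -/
def contCocone (B : TensorAlg T S) : CommutingCocone T S where
  R := contMonad B.carrier
  τ := algToCont T B.α B.α_unit B.α_mul
  σ := algToCont S B.β B.β_unit B.β_mul
  commutes {X Y} p q := by
    funext k
    exact B.tensor_law p q k

/-- Rotation lemma. -/
lemma pmu_rot (R : Monad (Type u)) {Y C X : Type u} (a : R.obj Y) (G : Y → R.obj C)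
    (f : C → R.obj X) :
    R.μ.app X (R.map (↾fun y => R.μ.app X (R.map (↾f) (G y))) a) =
      R.μ.app X (R.map (↾f) (R.μ.app C (R.map (↾G) a))) := by
  have e1 : R.map (↾fun y => R.μ.app X (R.map (↾f) (G y))) a
      = R.map (R.μ.app X) (R.map (↾fun y => R.map (↾f) (G y)) a) :=
    pmap_comp (fun y => R.map (↾f) (G y)) (R.μ.app X) a
  have e2 : R.map (↾fun y => R.map (↾f) (G y)) a = R.map (R.map (↾f)) (R.map (↾G) a) :=
    pmap_comp_fh G (R.map (↾f)) a
  rw [e1, e2, passoc, pmu_nat]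

/-- The free tensor algebra over a commuting cocone. -/
def freeAlg (c : CommutingCocone T S) (X : Type u) : TensorAlg T S where
  carrier := c.R.obj X
  α p := c.R.μ.app X (c.τ.app (c.R.obj X) p)
  β q := c.R.μ.app X (c.σ.app (c.R.obj X) q)
  α_unit x := by beta_reduce; rw [phom_eta, pleft_unit]
  β_unit x := by beta_reduce; rw [phom_eta, pleft_unit]
  α_mul m := by
    beta_reduce
    rw [phom_mu c.τ m, ← passoc]
    exact congrArg (c.R.μ.app X) <| (phom_nat c.τ (c.R.μ.app X) (T.map (c.τ.app (c.R.obj X)) m)).trans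
      (congrArg _ (pmap_comp (c.τ.app (c.R.obj X)) (c.R.μ.app X) m).symm)
  β_mul m := by
    beta_reduce
    rw [phom_mu c.σ m, ← passoc]
    exact congrArg (c.R.μ.app X) <| (phom_nat c.σ (c.R.μ.app X) (S.map (c.σ.app (c.R.obj X)) m)).trans
      (congrArg _ (pmap_comp (c.σ.app (c.R.obj X)) (c.R.μ.app X) m).symm)
  tensor_law {Y Z} p q f := by
    beta_reduce
    rw [← phom_nat c.τ _ p]
    have h1 : (fun y => c.R.μ.app X (c.σ.app (c.R.obj X) (S.map (↾fun z => f (y, z)) q)))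
        = fun y => c.R.μ.app X
            (c.R.map (↾f) (c.R.map (↾fun z => (y, z)) (c.σ.app Z q))) := by
      funext y
      rw [← phom_nat c.σ (fun z => f (y, z)) q]
      rw [pmap_comp (fun z => (y, z)) f (c.σ.app Z q)]
    rw [h1, pmu_rot c.R (c.τ.app Y p)
      (fun y => c.R.map (↾fun z => (y, z)) (c.σ.app Z q)) f]
    rw [← phom_nat c.σ _ q]
    have h2 : (fun z => c.R.μ.app X (c.τ.app (c.R.obj X) (T.map (↾fun y => f (y, z)) p)))
        = fun z => c.R.μ.app X
            (c.R.map (↾f) (c.R.map (↾fun y => (y, z)) (c.τ.app Y p))) := by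
      funext z
      rw [← phom_nat c.τ (fun y => f (y, z)) p]
      rw [pmap_comp (fun y => (y, z)) f (c.τ.app Y p)]
    rw [h2, pmu_rot c.R (c.σ.app Z q)
      (fun z => c.R.map (↾fun y => (y, z)) (c.τ.app Y p)) f]
    rw [c.commutes p q]

variable {T S : Monad (Type u)}

/-- The free tensor-algebra functor attached to a commuting cocone. -/
def freeFunctor (c : CommutingCocone T S) : Type u ⥤ TensorAlg T S where
  obj X := freeAlg c X
  map {X Y} f :=
    { toFun := c.R.map f
      map_α := fun m => by
        show c.R.map f (c.R.μ.app X (c.τ.app (c.R.obj X) m)) =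
          c.R.μ.app Y (c.τ.app (c.R.obj Y) (T.map (c.R.map f) m))
        rw [← phom_natH c.τ (c.R.map f) m, pmu_natH]
      map_β := fun m => by
        show c.R.map f (c.R.μ.app X (c.σ.app (c.R.obj X) m)) =
          c.R.μ.app Y (c.σ.app (c.R.obj Y) (S.map (c.R.map f) m))
        rw [← phom_natH c.σ (c.R.map f) m, pmu_natH] }
  map_id X := by
    apply TensorAlgHom.ext
    funext x
    exact FunctorToTypes.map_id_apply (F := c.R.toFunctor) x
  map_comp {X Y Z} f g := by
    apply TensorAlgHom.ext
    funext x
    exact FunctorToTypes.map_comp_apply c.R.toFunctor f g x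

section PairMonad

variable {A B : Type u}

/-- The carrier of the "pairing" monad of a function. -/
def PairObj (g : A → B) (X : Type u) : Type u :=
  {uv : ((X → A) → A) × ((X → B) → B) // ∀ k : X → A, g (uv.1 k) = uv.2 (fun x => g (k x))}

/-- The pairing monad of a function: a submonad of the product of two continuation
monads consisting of compatible pairs. -/
def pairMonad (g : A → B) : Monad (Type u) where
  obj X := PairObj g X
  map f := ↾fun uv => ⟨(fun k => uv.1.1 (fun x => k (f x)), fun k => uv.1.2 (fun x => k (f x))),
    fun k => uv.2 (fun x => k (f x))⟩
  map_id _ := rfl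
  map_comp _ _ := rfl
  η :=
    { app := fun X => ↾fun x => ⟨(fun k => k x, fun k => k x), fun _ => rfl⟩
      naturality := fun _ _ _ => rfl }
  μ :=
    { app := fun X => ↾fun m => ⟨(fun k => m.1.1 (fun u => u.1.1 k), fun k => m.1.2 (fun u => u.1.2 k)),
        fun k => by
          have h := m.2 (fun u => u.1.1 k)
          rw [h]
          exact congrArg m.1.2 (funext fun u => u.2 k)⟩
      naturality := fun _ _ _ => rfl }
  assoc _ := rfl
  left_unit _ := rfl
  right_unit _ := rfl


/-- First projection from the pairing monad. -/
def pairFst (g : A → B) : pairMonad g ⟶ contMonad A where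
  toNatTrans := { app := fun X => ↾fun uv => uv.1.1, naturality := fun _ _ _ => rfl }
  app_η _ := rfl
  app_μ _ := rfl

/-- Second projection from the pairing monad. -/
def pairSnd (g : A → B) : pairMonad g ⟶ contMonad B where
  toNatTrans := { app := fun X => ↾fun uv => uv.1.2, naturality := fun _ _ _ => rfl }
  app_η _ := rfl
  app_μ _ := rfl


end PairMonad

section PairHoms

variable {A B : TensorAlg T S}

/-- Component function for `tauPair`. -/
def tauPairApp (g : A ⟶ B) (X : Type u) (p : T.obj X) : PairObj g.toFun X :=
  ⟨(fun k => A.α (T.map (↾k) p), fun k => B.α (T.map (↾k) p)),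
    fun k => by rw [g.map_α, ← pmap_comp]⟩

/-- Component function for `sigmaPair`. -/
def sigmaPairApp (g : A ⟶ B) (X : Type u) (q : S.obj X) : PairObj g.toFun X :=
  ⟨(fun k => A.β (S.map (↾k) q), fun k => B.β (S.map (↾k) q)),
    fun k => by rw [g.map_β, ← pmap_comp]⟩

/-- The monad morphism into the pairing monad induced by a tensor algebra morphism,
`T`-component. -/
def tauPair (g : A ⟶ B) : T ⟶ pairMonad g.toFun where
  toNatTrans :=
    { app := fun X => ↾tauPairApp g X
      naturality := fun X Y f => ConcreteCategory.hom_ext _ _ fun p => by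
        apply Subtype.ext
        apply Prod.ext
        · funext k
          show A.α (T.map (↾k) (T.map f p)) = A.α (T.map (↾fun x => k (f x)) p)
          rw [← pmap_comp_hf]
        · funext k
          show B.α (T.map (↾k) (T.map f p)) = B.α (T.map (↾fun x => k (f x)) p)
          rw [← pmap_comp_hf] }
  app_η X := ConcreteCategory.hom_ext _ _ fun x => by
    apply Subtype.ext
    apply Prod.ext
    · funext k
      show A.α (T.map (↾k) (T.η.app X x)) = k x
      rw [peta_nat, A.α_unit]
    · funext k
      show B.α (T.map (↾k) (T.η.app X x)) = k x
      rw [peta_nat, B.α_unit]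
  app_μ X := ConcreteCategory.hom_ext _ _ fun m => by
    apply Subtype.ext
    apply Prod.ext
    · funext k
      show A.α (T.map (↾k) (T.μ.app X m)) =
        A.α (T.map (↾fun u => u.1.1 k) (T.map (↾tauPairApp g X) m))
      rw [← pmap_comp, ← pmu_nat, A.α_mul, ← pmap_comp_hf]
      rfl
    · funext k
      show B.α (T.map (↾k) (T.μ.app X m)) =
        B.α (T.map (↾fun u => u.1.2 k) (T.map (↾tauPairApp g X) m))
      rw [← pmap_comp, ← pmu_nat, B.α_mul, ← pmap_comp_hf]
      rfl

/-- `S`-component. -/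
def sigmaPair (g : A ⟶ B) : S ⟶ pairMonad g.toFun where
  toNatTrans :=
    { app := fun X => ↾sigmaPairApp g X
      naturality := fun X Y f => ConcreteCategory.hom_ext _ _ fun p => by
        apply Subtype.ext
        apply Prod.ext
        · funext k
          show A.β (S.map (↾k) (S.map f p)) = A.β (S.map (↾fun x => k (f x)) p)
          rw [← pmap_comp_hf]
        · funext k
          show B.β (S.map (↾k) (S.map f p)) = B.β (S.map (↾fun x => k (f x)) p)
          rw [← pmap_comp_hf] }
  app_η X := ConcreteCategory.hom_ext _ _ fun x => by
    apply Subtype.ext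
    apply Prod.ext
    · funext k
      show A.β (S.map (↾k) (S.η.app X x)) = k x
      rw [peta_nat, A.β_unit]
    · funext k
      show B.β (S.map (↾k) (S.η.app X x)) = k x
      rw [peta_nat, B.β_unit]
  app_μ X := ConcreteCategory.hom_ext _ _ fun m => by
    apply Subtype.ext
    apply Prod.ext
    · funext k
      show A.β (S.map (↾k) (S.μ.app X m)) =
        A.β (S.map (↾fun u => u.1.1 k) (S.map (↾sigmaPairApp g X) m))
      rw [← pmap_comp, ← pmu_nat, A.β_mul, ← pmap_comp_hf]
      rfl
    · funext k
      show B.β (S.map (↾k) (S.μ.app X m)) =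
        B.β (S.map (↾fun u => u.1.2 k) (S.map (↾sigmaPairApp g X) m))
      rw [← pmap_comp, ← pmu_nat, B.β_mul, ← pmap_comp_hf]
      rfl

/-- The commuting cocone on the pairing monad of a tensor algebra morphism. -/
def pairCocone (g : A ⟶ B) : CommutingCocone T S where
  R := pairMonad g.toFun
  τ := tauPair g
  σ := sigmaPair g
  commutes {X Y} p q := by
    apply Subtype.ext
    apply Prod.ext
    · funext k
      exact A.tensor_law p q k
    · funext k
      exact B.tensor_law p q k

lemma tauPair_fst (g : A ⟶ B) : tauPair g ≫ pairFst g.toFun = (contCocone A).τ := rfl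

lemma tauPair_snd (g : A ⟶ B) : tauPair g ≫ pairSnd g.toFun = (contCocone B).τ := rfl

lemma sigmaPair_fst (g : A ⟶ B) : sigmaPair g ≫ pairFst g.toFun = (contCocone A).σ := rfl

lemma sigmaPair_snd (g : A ⟶ B) : sigmaPair g ≫ pairSnd g.toFun = (contCocone B).σ := rfl

end PairHoms

section Forward

variable (c : CommutingCocone T S) (hc : IsMonadTensorProduct c)

/-- The initial map into the continuation cocone of a tensor algebra. -/
noncomputable def initHom (B : TensorAlg T S) : c.R ⟶ contMonad B.carrier :=
  (hc (contCocone B)).exists.choose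

lemma initHom_tau (B : TensorAlg T S) : c.τ ≫ initHom c hc B = (contCocone B).τ :=
  (hc (contCocone B)).exists.choose_spec.1

lemma initHom_sigma (B : TensorAlg T S) : c.σ ≫ initHom c hc B = (contCocone B).σ :=
  (hc (contCocone B)).exists.choose_spec.2

lemma initHom_unique {B : TensorAlg T S} (h' : c.R ⟶ contMonad B.carrier)
    (h1 : c.τ ≫ h' = (contCocone B).τ) (h2 : c.σ ≫ h' = (contCocone B).σ) :
    h' = initHom c hc B :=
  (hc (contCocone B)).unique ⟨h1, h2⟩ ⟨initHom_tau c hc B, initHom_sigma c hc B⟩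

/-- The Eilenberg–Moore structure on a tensor algebra for the tensor monad. -/
noncomputable def bigTheta (B : TensorAlg T S) : c.R.obj B.carrier → B.carrier :=
  contTheta (initHom c hc B)

lemma bigTheta_eta (B : TensorAlg T S) (x : B.carrier) :
    bigTheta c hc B (c.R.η.app B.carrier x) = x :=
  contTheta_eta _ x

lemma bigTheta_mu (B : TensorAlg T S) (m : c.R.obj (c.R.obj B.carrier)) :
    bigTheta c hc B (c.R.μ.app B.carrier m) =
      bigTheta c hc B (c.R.map (↾bigTheta c hc B) m) :=
  contTheta_mu _ m

lemma bigTheta_tau (B : TensorAlg T S) (p : T.obj B.carrier) :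
    bigTheta c hc B (c.τ.app B.carrier p) = B.α p := by
  have h : bigTheta c hc B (c.τ.app B.carrier p) = B.α (T.map (↾id) p) :=
    congrArg (fun (e : T ⟶ contMonad B.carrier) => e.app B.carrier p id) (initHom_tau c hc B)
  rw [h, pmap_id]

lemma bigTheta_sigma (B : TensorAlg T S) (q : S.obj B.carrier) :
    bigTheta c hc B (c.σ.app B.carrier q) = B.β q := by
  have h : bigTheta c hc B (c.σ.app B.carrier q) = B.β (S.map (↾id) q) :=
    congrArg (fun (e : S ⟶ contMonad B.carrier) => e.app B.carrier q id) (initHom_sigma c hc B)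
  rw [h, pmap_id]

lemma bigTheta_hom {A B : TensorAlg T S} (g : A ⟶ B) (r : c.R.obj A.carrier) :
    g.toFun (bigTheta c hc A r) = bigTheta c hc B (c.R.map (↾g.toFun) r) := by
  obtain ⟨h1, h2⟩ := (hc (pairCocone g)).exists.choose_spec
  set hP := (hc (pairCocone g)).exists.choose with hPdef
  have e1 : hP ≫ pairFst g.toFun = initHom c hc A := by
    apply initHom_unique
    · erw [← Category.assoc, h1]; rfl
    · erw [← Category.assoc, h2]; rfl
  have e2 : hP ≫ pairSnd g.toFun = initHom c hc B := by
    apply initHom_unique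
    · erw [← Category.assoc, h1]; rfl
    · erw [← Category.assoc, h2]; rfl
  have key := (hP.app A.carrier r).2 id
  have f1 : (hP.app A.carrier r).1.1 = (initHom c hc A).app A.carrier r :=
    congrArg (fun (e : c.R ⟶ contMonad A.carrier) => e.app A.carrier r) e1
  have f2 : (hP.app A.carrier r).1.2 = (initHom c hc B).app A.carrier r :=
    congrArg (fun (e : c.R ⟶ contMonad B.carrier) => e.app A.carrier r) e2
  show g.toFun ((initHom c hc A).app A.carrier r id) = _
  rw [← f1, key, f2, contTheta_app (initHom c hc B) r (fun x => g.toFun (id x))]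
  rfl

lemma bigTheta_free (X : Type u) : bigTheta c hc (freeAlg c X) = c.R.μ.app X := by
  have hmu : initHom c hc (freeAlg c X) =
      algToCont c.R (c.R.μ.app X) (fun m => pleft_unit m) (fun m => (passoc m).symm) := by
    refine (initHom_unique c hc _ ?_ ?_).symm
    · apply MonadHom.ext'
      funext Y
      refine ConcreteCategory.hom_ext _ _ fun p => ?_
      funext k
      show c.R.μ.app X (c.R.map (↾k) (c.τ.app Y p)) = (freeAlg c X).α (T.map (↾k) p)
      rw [phom_nat c.τ k p]
      rfl
    · apply MonadHom.ext'
      funext Y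
      refine ConcreteCategory.hom_ext _ _ fun q => ?_
      funext k
      show c.R.μ.app X (c.R.map (↾k) (c.σ.app Y q)) = (freeAlg c X).β (S.map (↾k) q)
      rw [phom_nat c.σ k q]
      rfl
  funext r
  show contTheta (initHom c hc (freeAlg c X)) r = _
  rw [hmu]
  show c.R.μ.app X (c.R.map (↾id) r) = c.R.μ.app X r
  exact congrArg _ (pmap_id r)

lemma free_hom_eq {X : Type u} {B : TensorAlg T S} (g : freeAlg c X ⟶ B)
    (r : c.R.obj X) :
    g.toFun r = bigTheta c hc B (c.R.map (↾fun x => g.toFun (c.R.η.app X x)) r) := by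
  have h := bigTheta_hom c hc g (c.R.map (c.R.η.app X) r)
  rw [bigTheta_free] at h
  rw [pright_unit] at h
  erw [h, ← pmap_comp_hf]

/-- Extension of a function to a tensor algebra morphism from the free algebra. -/
noncomputable def extendHom {X : Type u} (B : TensorAlg T S) (f : X → B.carrier) :
    freeAlg c X ⟶ B where
  toFun r := bigTheta c hc B (c.R.map (↾f) r)
  map_α m := by
    show bigTheta c hc B (c.R.map (↾f) (c.R.μ.app X (c.τ.app (c.R.obj X) m))) = _
    erw [← pmu_nat, phom_natH c.τ (c.R.map (↾f)) m, bigTheta_mu,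
      phom_nat c.τ (bigTheta c hc B) (T.map (c.R.map (↾f)) m), bigTheta_tau, ← pmap_comp_hf]
    rfl
  map_β m := by
    show bigTheta c hc B (c.R.map (↾f) (c.R.μ.app X (c.σ.app (c.R.obj X) m))) = _
    erw [← pmu_nat, phom_natH c.σ (c.R.map (↾f)) m, bigTheta_mu,
      phom_nat c.σ (bigTheta c hc B) (S.map (c.R.map (↾f)) m), bigTheta_sigma, ← pmap_comp_hf]
    rfl

/-- The free–forgetful adjunction for tensor algebras built from a tensor product. -/
noncomputable def forwardAdj : freeFunctor c ⊣ forgetTAlg T S :=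
  Adjunction.mkOfHomEquiv
    { homEquiv := fun X B =>
        { toFun := fun g => ↾fun x => g.toFun (c.R.η.app X x)
          invFun := fun f => extendHom c hc B f
          left_inv := fun g => by
            apply TensorAlgHom.ext
            funext r
            exact (free_hom_eq c hc g r).symm
          right_inv := fun f => by
            refine ConcreteCategory.hom_ext _ _ fun x => ?_
            show bigTheta c hc B (c.R.map f (c.R.η.app X x)) = f x
            rw [peta_natH]
            exact bigTheta_eta c hc B (f x) }
      homEquiv_naturality_left_symm := fun {X' X B} u g => by
        apply TensorAlgHom.ext
        funext r
        show bigTheta c hc B (c.R.map (↾fun x => g (u x)) r) =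
          bigTheta c hc B (c.R.map (↾g) (c.R.map (↾u) r))
        erw [pmap_comp]
      homEquiv_naturality_right := fun {X B B'} g k => rfl }

end Forward

lemma mhom_app_congr {M N : Monad (Type u)} {e1 e2 : M ⟶ N} (h : e1 = e2) (X : Type u)
    (m : M.obj X) : e1.app X m = e2.app X m := by rw [h]

section Backward

variable (F : Type u ⥤ TensorAlg T S) (adj : F ⊣ forgetTAlg T S)

lemma unit_nat {X Y : Type u} (f : X → Y) (x : X) :
    (F.map (↾f)).toFun (adj.unit.app X x) = adj.unit.app Y (f x) :=
  (types_congr_hom (adj.unit.naturality (↾f)) x).symm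

lemma unit_natH {X Y : Type u} (f : X ⟶ Y) (x : X) :
    (F.map f).toFun (adj.unit.app X x) = adj.unit.app Y (f x) :=
  (types_congr_hom (adj.unit.naturality f) x).symm

lemma counit_tri (B : TensorAlg T S) (y : B.carrier) :
    (adj.counit.app B).toFun (adj.unit.app ((forgetTAlg T S).obj B) y) = y :=
  types_congr_hom (adj.right_triangle_components B) y

lemma adj_hom_ext {X : Type u} {B : TensorAlg T S} (g1 g2 : F.obj X ⟶ B)
    (h : ∀ x, g1.toFun (adj.unit.app X x) = g2.toFun (adj.unit.app X x)) : g1 = g2 :=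
  (adj.homEquiv X B).injective (ConcreteCategory.hom_ext _ _ h)

/-- The monad morphism `T ⟶ adj.toMonad`. -/
def adjTau : T ⟶ adj.toMonad where
  toNatTrans :=
    { app := fun X => ↾fun p => (F.obj X).α (T.map (adj.unit.app X) p)
      naturality := fun X Y f => ConcreteCategory.hom_ext _ _ fun p => by
        show (F.obj Y).α (T.map (adj.unit.app Y) (T.map f p)) =
          (F.map f).toFun ((F.obj X).α (T.map (adj.unit.app X) p))
        erw [(F.map f).map_α, ← pmap_comp_hh f (adj.unit.app Y), ← pmap_comp_hf]
        have h : (fun x => (F.map f).toFun (adj.unit.app X x)) =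
            fun x => adj.unit.app Y (f x) := funext fun x => unit_nat F adj f x
        erw [h]; rfl }
  app_η X := ConcreteCategory.hom_ext _ _ fun x => by
    show (F.obj X).α (T.map (adj.unit.app X) (T.η.app X x)) = adj.unit.app X x
    have e : T.map (adj.unit.app X) (T.η.app X x) =
        T.η.app (F.obj X).carrier (adj.unit.app X x) := peta_nat (adj.unit.app X) x
    erw [e, (F.obj X).α_unit]
  app_μ X := ConcreteCategory.hom_ext _ _ fun m => by
    show (F.obj X).α (T.map (adj.unit.app X) (T.μ.app X m)) =
      (adj.counit.app (F.obj X)).toFun ((F.obj (adj.toMonad.obj X)).α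
        (T.map (adj.unit.app (adj.toMonad.obj X))
          (T.map (↾fun p => (F.obj X).α (T.map (adj.unit.app X) p)) m)))
    refine Eq.trans ?_ ((adj.counit.app (F.obj X)).map_α _).symm
    erw [← pmap_comp_fh, ← pmap_comp]
    show (F.obj X).α (T.map (adj.unit.app X) (T.μ.app X m)) =
      (F.obj X).α (T.map (↾fun p => (adj.counit.app (F.obj X)).toFun
        (adj.unit.app (adj.toMonad.obj X) ((F.obj X).α (T.map (adj.unit.app X) p)))) m)
    have h : (fun p => (adj.counit.app (F.obj X)).toFun (adj.unit.app (adj.toMonad.obj X)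
        ((F.obj X).α (T.map (adj.unit.app X) p)))) =
        fun p => (F.obj X).α (T.map (adj.unit.app X) p) :=
      funext fun p => counit_tri F adj (F.obj X) _
    have e : T.map (adj.unit.app X) (T.μ.app X m) =
        T.μ.app (F.obj X).carrier (T.map (T.map (adj.unit.app X)) m) :=
      (pmu_nat (adj.unit.app X) m).symm
    erw [h, e, (F.obj X).α_mul, ← pmap_comp_hf]

/-- The monad morphism `S ⟶ adj.toMonad`. -/
def adjSigma : S ⟶ adj.toMonad where
  toNatTrans :=
    { app := fun X => ↾fun q => (F.obj X).β (S.map (adj.unit.app X) q)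
      naturality := fun X Y f => ConcreteCategory.hom_ext _ _ fun q => by
        show (F.obj Y).β (S.map (adj.unit.app Y) (S.map f q)) =
          (F.map f).toFun ((F.obj X).β (S.map (adj.unit.app X) q))
        erw [(F.map f).map_β, ← pmap_comp_hh f (adj.unit.app Y), ← pmap_comp_hf]
        have h : (fun x => (F.map f).toFun (adj.unit.app X x)) =
            fun x => adj.unit.app Y (f x) := funext fun x => unit_nat F adj f x
        erw [h]; rfl }
  app_η X := ConcreteCategory.hom_ext _ _ fun x => by
    show (F.obj X).β (S.map (adj.unit.app X) (S.η.app X x)) = adj.unit.app X x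
    have e : S.map (adj.unit.app X) (S.η.app X x) =
        S.η.app (F.obj X).carrier (adj.unit.app X x) := peta_nat (adj.unit.app X) x
    erw [e, (F.obj X).β_unit]
  app_μ X := ConcreteCategory.hom_ext _ _ fun m => by
    show (F.obj X).β (S.map (adj.unit.app X) (S.μ.app X m)) =
      (adj.counit.app (F.obj X)).toFun ((F.obj (adj.toMonad.obj X)).β
        (S.map (adj.unit.app (adj.toMonad.obj X))
          (S.map (↾fun q => (F.obj X).β (S.map (adj.unit.app X) q)) m)))
    refine Eq.trans ?_ ((adj.counit.app (F.obj X)).map_β _).symm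
    erw [← pmap_comp_fh, ← pmap_comp]
    show (F.obj X).β (S.map (adj.unit.app X) (S.μ.app X m)) =
      (F.obj X).β (S.map (↾fun q => (adj.counit.app (F.obj X)).toFun
        (adj.unit.app (adj.toMonad.obj X) ((F.obj X).β (S.map (adj.unit.app X) q)))) m)
    have h : (fun q => (adj.counit.app (F.obj X)).toFun (adj.unit.app (adj.toMonad.obj X)
        ((F.obj X).β (S.map (adj.unit.app X) q)))) =
        fun q => (F.obj X).β (S.map (adj.unit.app X) q) :=
      funext fun q => counit_tri F adj (F.obj X) _
    have e : S.map (adj.unit.app X) (S.μ.app X m) =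
        S.μ.app (F.obj X).carrier (S.map (S.map (adj.unit.app X)) m) :=
      (pmu_nat (adj.unit.app X) m).symm
    erw [h, e, (F.obj X).β_mul, ← pmap_comp_hf]

lemma adj_push_alpha {X W : Type u} (g : X → adj.toMonad.obj W) (p : T.obj X) :
    adj.toMonad.μ.app W (adj.toMonad.map (↾g) ((F.obj X).α (T.map (adj.unit.app X) p)))
      = (F.obj W).α (T.map (↾g) p) := by
  show (adj.counit.app (F.obj W)).toFun
    ((F.map (↾g)).toFun ((F.obj X).α (T.map (adj.unit.app X) p))) = _
  erw [(F.map (↾g)).map_α]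
  refine ((adj.counit.app (F.obj W)).map_α _).trans ?_
  erw [← pmap_comp, ← pmap_comp_hf]
  show (F.obj W).α (T.map (↾fun x => (adj.counit.app (F.obj W)).toFun
      ((F.map (↾g)).toFun (adj.unit.app X x))) p) = (F.obj W).α (T.map (↾g) p)
  have h : (fun x => (adj.counit.app (F.obj W)).toFun
      ((F.map (↾g)).toFun (adj.unit.app X x))) = g := funext fun x => by
    rw [unit_nat F adj g x]
    exact counit_tri F adj (F.obj W) (g x)
  rw [h]; rfl

lemma adj_push_beta {X W : Type u} (g : X → adj.toMonad.obj W) (q : S.obj X) :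
    adj.toMonad.μ.app W (adj.toMonad.map (↾g) ((F.obj X).β (S.map (adj.unit.app X) q)))
      = (F.obj W).β (S.map (↾g) q) := by
  show (adj.counit.app (F.obj W)).toFun
    ((F.map (↾g)).toFun ((F.obj X).β (S.map (adj.unit.app X) q))) = _
  erw [(F.map (↾g)).map_β]
  refine ((adj.counit.app (F.obj W)).map_β _).trans ?_
  erw [← pmap_comp, ← pmap_comp_hf]
  show (F.obj W).β (S.map (↾fun x => (adj.counit.app (F.obj W)).toFun
      ((F.map (↾g)).toFun (adj.unit.app X x))) q) = (F.obj W).β (S.map (↾g) q)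
  have h : (fun x => (adj.counit.app (F.obj W)).toFun
      ((F.map (↾g)).toFun (adj.unit.app X x))) = g := funext fun x => by
    rw [unit_nat F adj g x]
    exact counit_tri F adj (F.obj W) (g x)
  rw [h]; rfl

/-- The commuting cocone obtained from a left adjoint to the forgetful functor. -/
def adjCocone : CommutingCocone T S where
  R := adj.toMonad
  τ := adjTau F adj
  σ := adjSigma F adj
  commutes {X Y} p q := by
    show adj.toMonad.μ.app (X × Y) (adj.toMonad.map (↾
        (fun x => adj.toMonad.map (↾fun y => (x, y))
          ((F.obj Y).β (S.map (adj.unit.app Y) q))))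
        ((F.obj X).α (T.map (adj.unit.app X) p))) =
      adj.toMonad.μ.app (X × Y) (adj.toMonad.map (↾
        (fun y => adj.toMonad.map (↾fun x => (x, y))
          ((F.obj X).α (T.map (adj.unit.app X) p))))
        ((F.obj Y).β (S.map (adj.unit.app Y) q)))
    rw [adj_push_alpha F adj _ p, adj_push_beta F adj _ q]
    have hL : (fun x => adj.toMonad.map (↾fun y => (x, y))
        ((F.obj Y).β (S.map (adj.unit.app Y) q))) =
        fun x => (F.obj (X × Y)).β (S.map (↾fun y => adj.unit.app (X × Y) (x, y)) q) := by
      funext x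
      show (F.map (↾fun y => (x, y))).toFun ((F.obj Y).β (S.map (adj.unit.app Y) q)) = _
      erw [(F.map (↾fun y => (x, y))).map_β, ← pmap_comp_hf]
      have h : (fun y => (F.map (↾fun y => (x, y))).toFun (adj.unit.app Y y)) =
          fun y => adj.unit.app (X × Y) (x, y) :=
        funext fun y => unit_nat F adj (fun y => (x, y)) y
      erw [h]; rfl
    have hR : (fun y => adj.toMonad.map (↾fun x => (x, y))
        ((F.obj X).α (T.map (adj.unit.app X) p))) =
        fun y => (F.obj (X × Y)).α (T.map (↾fun x => adj.unit.app (X × Y) (x, y)) p) := by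
      funext y
      show (F.map (↾fun x => (x, y))).toFun ((F.obj X).α (T.map (adj.unit.app X) p)) = _
      erw [(F.map (↾fun x => (x, y))).map_α, ← pmap_comp_hf]
      have h : (fun x => (F.map (↾fun x => (x, y))).toFun (adj.unit.app X x)) =
          fun x => adj.unit.app (X × Y) (x, y) :=
        funext fun x => unit_nat F adj (fun x => (x, y)) x
      erw [h]; rfl
    rw [hL, hR]
    exact (F.obj (X × Y)).tensor_law p q (adj.unit.app (X × Y))

end Backward

section BackwardInitial

variable (F : Type u ⥤ TensorAlg T S) (adj : F ⊣ forgetTAlg T S)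
variable (c' : CommutingCocone T S)

/-- The component of the mediating morphism. -/
noncomputable def backHomApp (X : Type u) : F.obj X ⟶ freeAlg c' X :=
  (adj.homEquiv X (freeAlg c' X)).symm (c'.R.η.app X)

lemma backHomApp_unit (X : Type u) (x : X) :
    (backHomApp F adj c' X).toFun (adj.unit.app X x) = c'.R.η.app X x :=
  types_congr_hom ((adj.homEquiv X (freeAlg c' X)).apply_symm_apply (c'.R.η.app X)) x

/-- Multiplication as a morphism of free tensor algebras. -/
def muHom (X : Type u) : freeAlg c' (c'.R.obj X) ⟶ freeAlg c' X where
  toFun := c'.R.μ.app X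
  map_α m := by
    show c'.R.μ.app X (c'.R.μ.app (c'.R.obj X) (c'.τ.app (c'.R.obj (c'.R.obj X)) m)) =
      c'.R.μ.app X (c'.τ.app (c'.R.obj X) (T.map (c'.R.μ.app X) m))
    rw [← phom_natH c'.τ (c'.R.μ.app X) m, passoc]
  map_β m := by
    show c'.R.μ.app X (c'.R.μ.app (c'.R.obj X) (c'.σ.app (c'.R.obj (c'.R.obj X)) m)) =
      c'.R.μ.app X (c'.σ.app (c'.R.obj X) (S.map (c'.R.μ.app X) m))
    rw [← phom_natH c'.σ (c'.R.μ.app X) m, passoc]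

/-- The mediating monad morphism. -/
noncomputable def backHom : adj.toMonad ⟶ c'.R where
  toNatTrans :=
    { app := fun X => ↾(backHomApp F adj c' X).toFun
      naturality := fun X Y f => by
        have key : F.map f ≫ backHomApp F adj c' Y =
            backHomApp F adj c' X ≫ (freeFunctor c').map f := by
          apply adj_hom_ext F adj
          intro x
          show (backHomApp F adj c' Y).toFun ((F.map f).toFun (adj.unit.app X x)) =
            c'.R.map f ((backHomApp F adj c' X).toFun (adj.unit.app X x))
          rw [unit_natH F adj f x, backHomApp_unit, backHomApp_unit, peta_natH]
        exact congrArg (forgetTAlg T S).map key }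
  app_η X := ConcreteCategory.hom_ext _ _ fun x => backHomApp_unit F adj c' X x
  app_μ X := ConcreteCategory.hom_ext _ _ fun m => by
    have key : adj.counit.app (F.obj X) ≫ backHomApp F adj c' X =
        F.map (↾(backHomApp F adj c' X).toFun) ≫ backHomApp F adj c' (c'.R.obj X) ≫
          muHom c' X := by
      apply adj_hom_ext F adj
      intro x
      show (backHomApp F adj c' X).toFun
          ((adj.counit.app (F.obj X)).toFun (adj.unit.app _ x)) =
        c'.R.μ.app X ((backHomApp F adj c' (c'.R.obj X)).toFun
          ((F.map (↾(backHomApp F adj c' X).toFun)).toFun (adj.unit.app _ x)))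
      rw [counit_tri F adj (F.obj X) x, unit_nat F adj (backHomApp F adj c' X).toFun x]
      have hb : (backHomApp F adj c' (c'.R.obj X)).toFun
          (adj.unit.app (freeAlg c' X).carrier ((backHomApp F adj c' X).toFun x)) =
          c'.R.η.app (c'.R.obj X) ((backHomApp F adj c' X).toFun x) :=
        backHomApp_unit F adj c' (c'.R.obj X) _
      erw [hb, pleft_unit]
    exact congr_fun (congrArg TensorAlgHom.toFun key) m

lemma backHom_tau : (adjCocone F adj).τ ≫ backHom F adj c' = c'.τ := by
  apply MonadHom.ext'
  funext X
  refine ConcreteCategory.hom_ext _ _ fun p => ?_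
  show (backHomApp F adj c' X).toFun ((F.obj X).α (T.map (adj.unit.app X) p)) = c'.τ.app X p
  erw [(backHomApp F adj c' X).map_α, ← pmap_comp_hf]
  have h : (fun x => (backHomApp F adj c' X).toFun (adj.unit.app X x)) = c'.R.η.app X :=
    funext fun x => backHomApp_unit F adj c' X x
  erw [h]
  show c'.R.μ.app X (c'.τ.app (c'.R.obj X) (T.map (c'.R.η.app X) p)) = c'.τ.app X p
  rw [← phom_natH c'.τ (c'.R.η.app X) p, pright_unit]
  rfl

lemma backHom_sigma : (adjCocone F adj).σ ≫ backHom F adj c' = c'.σ := by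
  apply MonadHom.ext'
  funext X
  refine ConcreteCategory.hom_ext _ _ fun q => ?_
  show (backHomApp F adj c' X).toFun ((F.obj X).β (S.map (adj.unit.app X) q)) = c'.σ.app X q
  erw [(backHomApp F adj c' X).map_β, ← pmap_comp_hf]
  have h : (fun x => (backHomApp F adj c' X).toFun (adj.unit.app X x)) = c'.R.η.app X :=
    funext fun x => backHomApp_unit F adj c' X x
  erw [h]
  show c'.R.μ.app X (c'.σ.app (c'.R.obj X) (S.map (c'.R.η.app X) q)) = c'.σ.app X q
  rw [← phom_natH c'.σ (c'.R.η.app X) q, pright_unit]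
  rfl

lemma alphaF_eq (X : Type u) (m : T.obj (adj.toMonad.obj X)) :
    (F.obj X).α m =
      adj.toMonad.μ.app X ((adjCocone F adj).τ.app (adj.toMonad.obj X) m) := by
  show _ = (adj.counit.app (F.obj X)).toFun ((F.obj (adj.toMonad.obj X)).α
    (T.map (adj.unit.app (adj.toMonad.obj X)) m))
  refine Eq.trans ?_ ((adj.counit.app (F.obj X)).map_α _).symm
  erw [← pmap_comp_hf]
  show (F.obj X).α m = (F.obj X).α (T.map (↾fun y => (adj.counit.app (F.obj X)).toFun
    (adj.unit.app (adj.toMonad.obj X) y)) m)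
  have h : (fun y => (adj.counit.app (F.obj X)).toFun
      (adj.unit.app (adj.toMonad.obj X) y)) = id :=
    funext fun y => counit_tri F adj (F.obj X) y
  erw [h, pmap_id]

lemma betaF_eq (X : Type u) (m : S.obj (adj.toMonad.obj X)) :
    (F.obj X).β m =
      adj.toMonad.μ.app X ((adjCocone F adj).σ.app (adj.toMonad.obj X) m) := by
  show _ = (adj.counit.app (F.obj X)).toFun ((F.obj (adj.toMonad.obj X)).β
    (S.map (adj.unit.app (adj.toMonad.obj X)) m))
  refine Eq.trans ?_ ((adj.counit.app (F.obj X)).map_β _).symm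
  erw [← pmap_comp_hf]
  show (F.obj X).β m = (F.obj X).β (S.map (↾fun y => (adj.counit.app (F.obj X)).toFun
    (adj.unit.app (adj.toMonad.obj X) y)) m)
  have h : (fun y => (adj.counit.app (F.obj X)).toFun
      (adj.unit.app (adj.toMonad.obj X) y)) = id :=
    funext fun y => counit_tri F adj (F.obj X) y
  erw [h, pmap_id]

lemma backHom_unique (h' : adj.toMonad ⟶ c'.R)
    (u1 : (adjCocone F adj).τ ≫ h' = c'.τ) (u2 : (adjCocone F adj).σ ≫ h' = c'.σ) :
    h' = backHom F adj c' := by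
  apply MonadHom.ext'
  funext X
  have hα : ∀ m : T.obj (adj.toMonad.obj X),
      h'.app X ((F.obj X).α m) = (freeAlg c' X).α (T.map (h'.app X) m) := fun m => by
    erw [alphaF_eq F adj X m, phom_mu h']
    have e : adj.toMonad.map (h'.app X) ((adjCocone F adj).τ.app (adj.toMonad.obj X) m)
        = (adjCocone F adj).τ.app (c'.R.obj X) (T.map (h'.app X) m) :=
      phom_nat (adjCocone F adj).τ (h'.app X) m
    rw [e]
    have h : h'.app (c'.R.obj X) ((adjCocone F adj).τ.app (c'.R.obj X)
        (T.map (h'.app X) m)) = c'.τ.app (c'.R.obj X) (T.map (h'.app X) m) :=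
      mhom_app_congr u1 _ _
    rw [h]
    rfl
  have hβ : ∀ m : S.obj (adj.toMonad.obj X),
      h'.app X ((F.obj X).β m) = (freeAlg c' X).β (S.map (h'.app X) m) := fun m => by
    erw [betaF_eq F adj X m, phom_mu h']
    have e : adj.toMonad.map (h'.app X) ((adjCocone F adj).σ.app (adj.toMonad.obj X) m)
        = (adjCocone F adj).σ.app (c'.R.obj X) (S.map (h'.app X) m) :=
      phom_nat (adjCocone F adj).σ (h'.app X) m
    rw [e]
    have h : h'.app (c'.R.obj X) ((adjCocone F adj).σ.app (c'.R.obj X)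
        (S.map (h'.app X) m)) = c'.σ.app (c'.R.obj X) (S.map (h'.app X) m) :=
      mhom_app_congr u2 _ _
    rw [h]
    rfl
  have key : (⟨h'.app X, hα, hβ⟩ : F.obj X ⟶ freeAlg c' X) = backHomApp F adj c' X := by
    apply adj_hom_ext F adj
    intro x
    show h'.app X (adj.unit.app X x) = (backHomApp F adj c' X).toFun (adj.unit.app X x)
    rw [backHomApp_unit]
    exact phom_eta h' x
  exact congrArg (forgetTAlg T S).map key

lemma adjCocone_initial : IsMonadTensorProduct (adjCocone F adj) := fun c' =>
  ⟨backHom F adj c', ⟨backHom_tau F adj c', backHom_sigma F adj c'⟩,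
    fun h' hh => backHom_unique F adj c' h' hh.1 hh.2⟩

end BackwardInitial

/-- Theorem 3.6: the tensor product of `T` and `S` exists iff the forgetful functor
from `(T,S)`-tensor algebras to sets has a left adjoint. -/
theorem isMonadTensorProduct_exists_iff_hasLeftAdjoint (T S : Monad (Type u)) :
    (∃ c : CommutingCocone T S, IsMonadTensorProduct c) ↔
      ∃ F : Type u ⥤ TensorAlg T S, Nonempty (F ⊣ forgetTAlg T S) := by
  constructor
  · rintro ⟨c, hc⟩
    exact ⟨freeFunctor c, ⟨forwardAdj c hc⟩⟩
  · rintro ⟨F, ⟨adj⟩⟩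
    exact ⟨adjCocone F adj, adjCocone_initial F adj⟩
end TensorAux
end

section
/- Let κ be a regular uncountable cardinal, T a monad on the category Type u of sets, and (A, α, β) a (P*κ, T)-tensor algebra (with β the P*κ-structure and α the T-structure) that is generated by a subset X̂ ⊆ A. Then for every x ∈ A there exists t ∈ T``X̂ with t ≤ x. -/
open CategoryTheory

universe u

/-- Underlying object map of the non-empty `κ`-bounded powerset monad. -/
def PstarObj (κ : Cardinal.{u}) (X : Type u) : Type u :=
  {s : Set X // s.Nonempty ∧ Cardinal.mk s < κ}

namespace PstarObj

variable {κ : Cardinal.{u}}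

/-- Direct image. -/
def fmap {X Y : Type u} (f : X → Y) (s : PstarObj κ X) : PstarObj κ Y :=
  ⟨f '' s.1, s.2.1.image f, Cardinal.mk_image_le.trans_lt s.2.2⟩

@[simp] theorem fmap_coe {X Y : Type u} (f : X → Y) (s : PstarObj κ X) :
    (fmap f s).1 = f '' s.1 := rfl

/-- Unit: singletons. -/
def eta (hκ : κ.IsRegular) {X : Type u} (x : X) : PstarObj κ X :=
  ⟨{x}, Set.singleton_nonempty x, by
    rw [Cardinal.mk_singleton]
    exact lt_of_lt_of_le Cardinal.one_lt_aleph0 hκ.aleph0_le⟩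

@[simp] theorem eta_coe (hκ : κ.IsRegular) {X : Type u} (x : X) :
    (eta hκ x : PstarObj κ X).1 = {x} := rfl

/-- Multiplication: union. -/
def mu (hκ : κ.IsRegular) {X : Type u} (S : PstarObj κ (PstarObj κ X)) : PstarObj κ X :=
  ⟨⋃ t ∈ S.1, t.1,
    (S.2.1).elim fun t ht => (t.2.1).elim fun x hx => ⟨x, Set.mem_biUnion ht hx⟩,
    (Cardinal.card_biUnion_lt_iff_forall_of_isRegular hκ S.2.2).mpr fun t _ => t.2.2⟩

@[simp] theorem mu_coe (hκ : κ.IsRegular) {X : Type u} (S : PstarObj κ (PstarObj κ X)) :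
    (mu hκ S).1 = ⋃ t ∈ S.1, t.1 := rfl

end PstarObj

/-- The non-empty `κ`-bounded powerset monad `P*κ`: it sends a set `X` to the set of
non-empty subsets of `X` of cardinality `< κ`, acts by direct image, has unit
`x ↦ {x}` and multiplication given by union. -/
def Pstar (κ : Cardinal.{u}) (hκ : κ.IsRegular) : Monad (Type u) where
  obj X := PstarObj κ X
  map f := TypeCat.ofHom (PstarObj.fmap f)
  map_id X := by
    ext s
    apply Subtype.ext
    simp [PstarObj.fmap]
  map_comp {X Y Z} f g := by
    ext s
    apply Subtype.ext
    show ((f ≫ g) '' s.1 : Set Z) = g '' (f '' s.1)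
    simp [Set.image_image]
  η :=
    { app := fun X => TypeCat.ofHom fun x => PstarObj.eta hκ x
      naturality := fun X Y f => by
        ext x
        apply Subtype.ext
        show ({f x} : Set Y) = f '' {x}
        simp }
  μ :=
    { app := fun X => TypeCat.ofHom fun S => PstarObj.mu hκ S
      naturality := fun X Y f => by
        ext S
        apply Subtype.ext
        show (⋃ t ∈ (PstarObj.fmap (PstarObj.fmap f) S).1, t.1 : Set Y)
          = f '' (⋃ t ∈ S.1, t.1)
        ext y
        simp only [PstarObj.fmap_coe, Set.mem_iUnion, Set.mem_image]
        constructor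
        · rintro ⟨t, ⟨⟨u, hu, rfl⟩, hy⟩⟩
          simp only [PstarObj.fmap_coe, Set.mem_image] at hy
          obtain ⟨x, hx, rfl⟩ := hy
          exact ⟨x, ⟨u, hu, hx⟩, rfl⟩
        · rintro ⟨x, ⟨⟨u, hu, hx⟩, rfl⟩⟩
          exact ⟨PstarObj.fmap f u, ⟨⟨u, hu, rfl⟩, by
            simp only [PstarObj.fmap_coe]
            exact ⟨x, hx, rfl⟩⟩⟩ }
  left_unit X := by
    ext S
    apply Subtype.ext
    show (⋃ t ∈ (PstarObj.eta hκ S).1, t.1 : Set X) = S.1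
    simp
  right_unit X := by
    ext S
    apply Subtype.ext
    show (⋃ t ∈ (PstarObj.fmap (PstarObj.eta hκ) S).1, t.1 : Set X) = S.1
    ext y
    simp
  assoc X := by
    ext SS
    apply Subtype.ext
    show (⋃ t ∈ (PstarObj.fmap (PstarObj.mu hκ) SS).1, t.1 : Set X)
      = ⋃ t ∈ (PstarObj.mu hκ SS).1, t.1
    ext y
    simp only [PstarObj.fmap_coe, PstarObj.mu_coe, Set.mem_iUnion, Set.mem_image]
    constructor
    · rintro ⟨t, ⟨⟨U, hU, rfl⟩, hy⟩⟩
      simp only [PstarObj.mu_coe, Set.mem_iUnion] at hy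
      obtain ⟨u, hu, hy⟩ := hy
      exact ⟨u, ⟨⟨U, hU, hu⟩, hy⟩⟩
    · rintro ⟨u, ⟨⟨U, hU, hu⟩, hy⟩⟩
      exact ⟨PstarObj.mu hκ U, ⟨⟨U, hU, rfl⟩, by
        simp only [PstarObj.mu_coe, Set.mem_iUnion]
        exact ⟨u, hu, hy⟩⟩⟩

/-- A subset of the carrier of a tensor algebra is closed if it is closed under both
algebra structures. -/
def TensorAlg.Closed {T S : Monad (Type u)} (A : TensorAlg T S) (s : Set A.carrier) : Prop :=
  (∀ m : T.obj s, A.α (T.map (TypeCat.ofHom (Subtype.val : s → A.carrier)) m) ∈ s) ∧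
    (∀ m : S.obj s, A.β (S.map (TypeCat.ofHom (Subtype.val : s → A.carrier)) m) ∈ s)

/-- A tensor algebra is generated by `X` if the only closed subset containing `X` is
the whole carrier. -/
def TensorAlg.GeneratedBy {T S : Monad (Type u)} (A : TensorAlg T S)
    (X : Set A.carrier) : Prop :=
  ∀ s : Set A.carrier, A.Closed s → X ⊆ s → s = Set.univ

/-- `T``Y`: the least subset of the carrier containing `Y` and closed under the
`T`-algebra structure `α`. -/
def TensorAlg.TClosure {T S : Monad (Type u)} (A : TensorAlg T S)
    (Y : Set A.carrier) : Set A.carrier :=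
  ⋂₀ {s : Set A.carrier |
    Y ⊆ s ∧ ∀ m : T.obj s, A.α (T.map (TypeCat.ofHom (Subtype.val : s → A.carrier)) m) ∈ s}

/-- The unordered pair `{x, y}` as an element of `P*κ`. -/
def pairEl {κ : Cardinal.{u}} (hκ : κ.IsRegular) {A : Type u} (x y : A) : PstarObj κ A :=
  ⟨{x, y}, ⟨x, Set.mem_insert x {y}⟩, by
    have hfin : Finite (↥({x, y} : Set A)) :=
      ((Set.finite_singleton y).insert x).to_subtype
    exact lt_of_lt_of_le (Cardinal.lt_aleph0_of_finite _) hκ.aleph0_le⟩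

/-- The semilattice order induced by the `P*κ`-algebra structure `β` of a
`(T, P*κ)`-tensor algebra: `x ≤ y` iff `x ∨ y = y`, where `x ∨ y = β {x, y}`. -/
def TensorAlg.le {κ : Cardinal.{u}} {hκ : κ.IsRegular} {T : Monad (Type u)}
    (A : TensorAlg T (Pstar κ hκ)) (x y : A.carrier) : Prop :=
  A.β (pairEl hκ x y) = y

/-- `P``Y = {β s | s ⊆ Y nonempty of cardinality < κ}`. -/
def TensorAlg.PImage {κ : Cardinal.{u}} {hκ : κ.IsRegular} {T : Monad (Type u)}
    (A : TensorAlg T (Pstar κ hκ)) (Y : Set A.carrier) : Set A.carrier :=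
  {a | ∃ s : PstarObj κ A.carrier, s.1 ⊆ Y ∧ A.β s = a}

section Aux

variable {κ : Cardinal.{u}} {hκ : κ.IsRegular} {T : Monad (Type u)}
  (A : TensorAlg T (Pstar κ hκ))

lemma map_pairEl {X Y : Type u} (f : X → Y) (x y : X) :
    (Pstar κ hκ).map (TypeCat.ofHom f) (pairEl hκ x y) = pairEl hκ (f x) (f y) :=
  Subtype.ext (by show f '' {x, y} = {f x, f y}; rw [Set.image_pair])

lemma pairEl_self {X : Type u} (x : X) : pairEl hκ x x = PstarObj.eta hκ x :=
  Subtype.ext (Set.pair_eq_singleton x)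

/-- `{x,y,z}` as an element of `P*κ`. -/
def tripleEl (hκ : κ.IsRegular) {X : Type u} (x y z : X) : PstarObj κ X :=
  ⟨{x, y, z}, ⟨x, by simp⟩, by
    have : Finite (↥({x, y, z} : Set X)) :=
      (((Set.finite_singleton z).insert y).insert x).to_subtype
    exact lt_of_lt_of_le (Cardinal.lt_aleph0_of_finite _) hκ.aleph0_le⟩

lemma beta_triple_left (x y z : A.carrier) :
    A.β (tripleEl hκ x y z) = A.β (pairEl hκ (A.β (pairEl hκ x y)) z) := by
  have h := A.β_mul (pairEl hκ (pairEl hκ x y) (PstarObj.eta hκ z))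
  have h1 : (Pstar κ hκ).μ.app A.carrier (pairEl hκ (pairEl hκ x y) (PstarObj.eta hκ z))
      = tripleEl hκ x y z := by
    apply Subtype.ext
    show (⋃ t ∈ ({pairEl hκ x y, PstarObj.eta hκ z} : Set (PstarObj κ A.carrier)), t.1)
      = ({x, y, z} : Set A.carrier)
    rw [Set.biUnion_pair]
    show ({x, y} : Set A.carrier) ∪ {z} = {x, y, z}
    ext a
    simp only [Set.mem_union, Set.mem_insert_iff, Set.mem_singleton_iff]
    tauto
  have h2 : (Pstar κ hκ).map (TypeCat.ofHom A.β) (pairEl hκ (pairEl hκ x y) (PstarObj.eta hκ z))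
      = pairEl hκ (A.β (pairEl hκ x y)) z := by
    refine (map_pairEl _ _ _).trans ?_
    congr 1
    exact A.β_unit z
  rw [h1, h2] at h
  exact h

lemma beta_triple_right (x y z : A.carrier) :
    A.β (tripleEl hκ x y z) = A.β (pairEl hκ x (A.β (pairEl hκ y z))) := by
  have h := A.β_mul (pairEl hκ (PstarObj.eta hκ x) (pairEl hκ y z))
  have h1 : (Pstar κ hκ).μ.app A.carrier (pairEl hκ (PstarObj.eta hκ x) (pairEl hκ y z))
      = tripleEl hκ x y z := by
    apply Subtype.ext
    show (⋃ t ∈ ({PstarObj.eta hκ x, pairEl hκ y z} : Set (PstarObj κ A.carrier)), t.1)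
      = ({x, y, z} : Set A.carrier)
    rw [Set.biUnion_pair]
    show ({x} : Set A.carrier) ∪ {y, z} = {x, y, z}
    rw [Set.singleton_union]
  have h2 : (Pstar κ hκ).map (TypeCat.ofHom A.β) (pairEl hκ (PstarObj.eta hκ x) (pairEl hκ y z))
      = pairEl hκ x (A.β (pairEl hκ y z)) := by
    refine (map_pairEl _ _ _).trans ?_
    congr 1
    exact A.β_unit x
  rw [h1, h2] at h
  exact h

lemma beta_assoc (x y z : A.carrier) :
    A.β (pairEl hκ (A.β (pairEl hκ x y)) z) = A.β (pairEl hκ x (A.β (pairEl hκ y z))) :=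
  (beta_triple_left A x y z).symm.trans (beta_triple_right A x y z)

lemma tle_refl (x : A.carrier) : A.β (pairEl hκ x x) = x := by
  rw [pairEl_self]
  exact A.β_unit x

lemma le_beta (s : PstarObj κ A.carrier) {a : A.carrier} (ha : a ∈ s.1) :
    A.β (pairEl hκ a (A.β s)) = A.β s := by
  have h := A.β_mul (pairEl hκ (PstarObj.eta hκ a) s)
  have h1 : (Pstar κ hκ).μ.app A.carrier (pairEl hκ (PstarObj.eta hκ a) s) = s := by
    apply Subtype.ext
    show (⋃ t ∈ ({PstarObj.eta hκ a, s} : Set (PstarObj κ A.carrier)), t.1) = s.1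
    rw [Set.biUnion_pair]
    show ({a} : Set A.carrier) ∪ s.1 = s.1
    rw [Set.singleton_union, Set.insert_eq_self.mpr ha]
  have h2 : (Pstar κ hκ).map (TypeCat.ofHom A.β) (pairEl hκ (PstarObj.eta hκ a) s)
      = pairEl hκ a (A.β s) := by
    refine (map_pairEl _ _ _).trans ?_
    congr 1
    exact A.β_unit a
  rw [h1, h2] at h
  exact h.symm

lemma tle_trans {t a x : A.carrier} (h1 : A.β (pairEl hκ t a) = a)
    (h2 : A.β (pairEl hκ a x) = x) : A.β (pairEl hκ t x) = x := by
  have assoc := beta_assoc A t a x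
  rw [h1] at assoc
  rw [h2] at assoc
  exact assoc.symm

lemma tclos_sub (Xhat : Set A.carrier) : Xhat ⊆ A.TClosure Xhat :=
  fun _ hx => Set.mem_sInter.2 fun _ hs => hs.1 hx

lemma tclos_closed (Xhat : Set A.carrier) (m : T.obj (A.TClosure Xhat)) :
    A.α (T.map (TypeCat.ofHom (Subtype.val : A.TClosure Xhat → A.carrier)) m) ∈ A.TClosure Xhat := by
  apply Set.mem_sInter.2
  intro s hs
  let incl : (A.TClosure Xhat).Elem → s.Elem :=
    fun a => ⟨a.1, Set.mem_sInter.1 a.2 s hs⟩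
  have hcomp : T.map (TypeCat.ofHom (Subtype.val : A.TClosure Xhat → A.carrier)) m
      = T.map (TypeCat.ofHom (Subtype.val : s → A.carrier)) (T.map (TypeCat.ofHom incl) m) :=
    ConcreteCategory.congr_hom (T.map_comp (TypeCat.ofHom incl) (TypeCat.ofHom (Subtype.val : s → A.carrier))) m
  rw [hcomp]
  exact hs.2 (T.map (TypeCat.ofHom incl) m)

end Aux

/-- Lemma 4.1: in a `(P*κ, T)`-tensor algebra generated by `X̂` (for `κ` regular and
uncountable), every element lies above some element of the `T`-subalgebra `T``X̂`
generated by `X̂`. -/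
theorem exists_le_of_mem_tensorAlg {κ : Cardinal.{u}} (hκ : κ.IsRegular)
    (hunc : Cardinal.aleph0 < κ) (T : Monad (Type u))
    (A : TensorAlg T (Pstar κ hκ)) (Xhat : Set A.carrier) (hgen : A.GeneratedBy Xhat)
    (x : A.carrier) :
    ∃ t ∈ A.TClosure Xhat, A.le t x := by
  classical
  set G : Set A.carrier := {x | ∃ t ∈ A.TClosure Xhat, A.le t x} with hGdef
  have hclosed : A.Closed G := by
    constructor
    · -- closure under the T-structure α, via the tensor law
      intro m
      choose t ht1 ht2 using fun a : G => a.2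
      set q : PstarObj κ (ULift.{u} Bool) :=
        pairEl hκ (ULift.up false) (ULift.up true) with hq
      set f : G × ULift.{u} Bool → A.carrier :=
        fun p => cond p.2.down p.1.val (t p.1) with hf
      have tl := A.tensor_law m q f
      have hL : (fun y : G => A.β ((Pstar κ hκ).map (TypeCat.ofHom fun z => f (y, z)) q))
          = (Subtype.val : G → A.carrier) := by
        funext y
        show A.β ((Pstar κ hκ).map (TypeCat.ofHom fun z => f (y, z)) q) = y.val
        rw [hq, map_pairEl]
        exact ht2 y
      have hR : ((Pstar κ hκ).map (TypeCat.ofHom fun z => A.α (T.map (TypeCat.ofHom fun y => f (y, z)) m)) q)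
          = pairEl hκ (A.α (T.map (TypeCat.ofHom fun y : G => t y) m))
              (A.α (T.map (TypeCat.ofHom (Subtype.val : G → A.carrier)) m)) := by
        rw [hq, map_pairEl]
      rw [hL, hR] at tl
      refine ⟨A.α (T.map (TypeCat.ofHom fun y : G => t y) m), ?_, tl.symm⟩
      let t' : G → (A.TClosure Xhat : Set A.carrier) := fun a => ⟨t a, ht1 a⟩
      have hmap : T.map (TypeCat.ofHom fun y : G => t y) m
          = T.map (TypeCat.ofHom (Subtype.val : A.TClosure Xhat → A.carrier)) (T.map (TypeCat.ofHom t') m) :=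
        ConcreteCategory.congr_hom (T.map_comp (TypeCat.ofHom t') (TypeCat.ofHom (Subtype.val : A.TClosure Xhat → A.carrier))) m
      rw [hmap]
      exact tclos_closed A Xhat (T.map (TypeCat.ofHom t') m)
    · -- closure under the P*κ-structure β
      intro m
      set s : PstarObj κ A.carrier := (Pstar κ hκ).map (TypeCat.ofHom (Subtype.val : G → A.carrier)) m
        with hs
      obtain ⟨a0, ha0⟩ := s.2.1
      have ha0G : a0 ∈ G := by
        have : a0 ∈ (Subtype.val : G → A.carrier) '' m.1 := ha0
        obtain ⟨y, _, rfl⟩ := this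
        exact y.2
      obtain ⟨t0, ht0, hle⟩ := ha0G
      exact ⟨t0, ht0, tle_trans A hle (le_beta A s ha0)⟩
  have hXG : Xhat ⊆ G := fun a ha => ⟨a, tclos_sub A Xhat ha, tle_refl A a⟩
  have := hgen G hclosed hXG
  have hx : x ∈ G := this ▸ Set.mem_univ x
  exact hx
end

section
/- Let κ be a regular uncountable cardinal, T a monad on the category Type u of sets, and (A, α, β) a (P*κ, T)-tensor algebra generated by a subset X̂ ⊆ A. Define X_0 = X̂, X_{n+1} = P``(T``X_n) for n ∈ ℕ, and X_ω = ⋃_{n∈ℕ} X_n. Then every x ∈ P``X_ω can be written as a countable join x = β({x_n | n ∈ ℕ, n ≥ 1}) for some choice of elements x_n with x_n ∈ X_n for each n ≥ 1. -/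
open CategoryTheory

universe u

section Aux

variable {κ : Cardinal.{u}} {hκ : κ.IsRegular} {T : Monad (Type u)}
  (A : TensorAlg T (Pstar κ hκ))

theorem TensorAlg.beta_congr {U V : PstarObj κ A.carrier} (h : U.1 = V.1) :
    A.β U = A.β V := congrArg A.β (Subtype.ext h)

theorem TensorAlg.join_eq (Q : PstarObj κ (PstarObj κ A.carrier))
    {W V : PstarObj κ A.carrier} (hW : W.1 = ⋃ t ∈ Q.1, t.1)
    (hV : V.1 = A.β '' Q.1) : A.β W = A.β V := by
  have h1 := A.β_mul Q
  have h2 : A.β ((Pstar κ hκ).μ.app A.carrier Q) = A.β W :=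
    A.beta_congr (by rw [hW]; rfl)
  have h3 : A.β ((Pstar κ hκ).map (TypeCat.ofHom A.β) Q) = A.β V :=
    A.beta_congr (by rw [hV]; rfl)
  rw [h2, h3] at h1
  exact h1

theorem TensorAlg.le_refl (a : A.carrier) : A.le a a := by
  show A.β (pairEl hκ a a) = a
  have h : A.β (pairEl hκ a a) = A.β ((Pstar κ hκ).η.app A.carrier a) :=
    A.beta_congr (Set.pair_eq_singleton a)
  rw [h, A.β_unit]

theorem TensorAlg.pair_join {U V W : PstarObj κ A.carrier}
    (hW : W.1 = U.1 ∪ V.1) :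
    A.β (pairEl hκ (A.β U) (A.β V)) = A.β W := by
  have hfin : ({U, V} : Set (PstarObj κ A.carrier)).Finite :=
    (Set.finite_singleton V).insert U
  refine (A.join_eq ⟨{U, V}, ⟨U, Or.inl rfl⟩, ?_⟩ ?_ ?_).symm
  · have := hfin.to_subtype
    exact lt_of_lt_of_le (Cardinal.lt_aleph0_of_finite _) hκ.aleph0_le
  · rw [hW]; simp
  · show ({A.β U, A.β V} : Set A.carrier) = A.β '' {U, V}
    exact (Set.image_pair _ _ _).symm

theorem TensorAlg.le_join {U : PstarObj κ A.carrier} {a : A.carrier} (ha : a ∈ U.1) :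
    A.le a (A.β U) := by
  show A.β (pairEl hκ a (A.β U)) = A.β U
  have hbu : A.β (PstarObj.eta hκ a) = a := A.β_unit a
  conv_lhs => rw [← hbu]
  exact A.pair_join
    (by show U.1 = ({a} : Set A.carrier) ∪ U.1
        rw [Set.union_eq_self_of_subset_left (Set.singleton_subset_iff.mpr ha)])

theorem TensorAlg.le_trans {a b c : A.carrier} (hab : A.le a b) (hbc : A.le b c) :
    A.le a c := by
  have hbua : A.β (PstarObj.eta hκ a) = a := A.β_unit a
  have hbuc : A.β (PstarObj.eta hκ c) = c := A.β_unit c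
  have hfin : ({a, b, c} : Set A.carrier).Finite :=
    (Set.finite_singleton c).insert b |>.insert a
  let tri : PstarObj κ A.carrier := ⟨{a, b, c}, ⟨a, Or.inl rfl⟩, by
    have := hfin.to_subtype
    exact lt_of_lt_of_le (Cardinal.lt_aleph0_of_finite _) hκ.aleph0_le⟩
  have h1 : A.β (pairEl hκ (A.β (PstarObj.eta hκ a)) (A.β (pairEl hκ b c))) = A.β tri :=
    A.pair_join (by show ({a, b, c} : Set A.carrier) = {a} ∪ {b, c}; rw [Set.singleton_union])
  have h2 : A.β (pairEl hκ (A.β (pairEl hκ a b)) (A.β (PstarObj.eta hκ c))) = A.β tri :=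
    A.pair_join (by
      show ({a, b, c} : Set A.carrier) = {a, b} ∪ {c}
      ext z; simp only [Set.mem_insert_iff, Set.mem_singleton_iff, Set.mem_union]; tauto)
  show A.β (pairEl hκ a c) = c
  calc A.β (pairEl hκ a c)
      = A.β (pairEl hκ a (A.β (pairEl hκ b c))) := by rw [hbc]
    _ = A.β (pairEl hκ (A.β (PstarObj.eta hκ a)) (A.β (pairEl hκ b c))) := by rw [hbua]
    _ = A.β tri := h1
    _ = A.β (pairEl hκ (A.β (pairEl hκ a b)) (A.β (PstarObj.eta hκ c))) := h2.symm
    _ = A.β (pairEl hκ b c) := by rw [hbuc, hab]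
    _ = c := hbc

theorem TensorAlg.alpha_mono {Y : Type u} (p : T.obj Y) (f g : Y → A.carrier)
    (h : ∀ y, A.le (f y) (g y)) :
    A.le (A.α (T.map (TypeCat.ofHom f) p)) (A.α (T.map (TypeCat.ofHom g) p)) := by
  let q : (Pstar κ hκ).obj (ULift.{u} Bool) :=
    ⟨Set.univ, ⟨⟨true⟩, trivial⟩, by
      have : Finite (↥(Set.univ : Set (ULift.{u} Bool))) := Set.finite_univ.to_subtype
      exact lt_of_lt_of_le (Cardinal.lt_aleph0_of_finite _) hκ.aleph0_le⟩
  let F : Y × ULift.{u} Bool → A.carrier := fun yz => bif yz.2.down then g yz.1 else f yz.1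
  have tl := A.tensor_law p q F
  have hL : (fun y => A.β ((Pstar κ hκ).map (TypeCat.ofHom fun z => F (y, z)) q)) = g := by
    funext y
    have himg : ((Pstar κ hκ).map (TypeCat.ofHom fun z => F (y, z)) q).1 = (pairEl hκ (f y) (g y)).1 := by
      show (fun z => F (y, z)) '' Set.univ = ({f y, g y} : Set A.carrier)
      rw [Set.image_univ]
      ext a
      simp only [Set.mem_range, Set.mem_insert_iff, Set.mem_singleton_iff]
      constructor
      · rintro ⟨⟨b⟩, rfl⟩
        cases b
        · exact Or.inl rfl
        · exact Or.inr rfl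
      · rintro (rfl | rfl)
        · exact ⟨⟨false⟩, rfl⟩
        · exact ⟨⟨true⟩, rfl⟩
    rw [A.beta_congr himg]
    exact h y
  have hR : ((Pstar κ hκ).map (TypeCat.ofHom fun z => A.α (T.map (TypeCat.ofHom fun y => F (y, z)) p)) q).1
      = (pairEl hκ (A.α (T.map (TypeCat.ofHom f) p)) (A.α (T.map (TypeCat.ofHom g) p))).1 := by
    show (fun z => A.α (T.map (TypeCat.ofHom fun y => F (y, z)) p)) '' Set.univ = _
    rw [Set.image_univ]
    ext a
    simp only [Set.mem_range, Set.mem_insert_iff, Set.mem_singleton_iff]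
    constructor
    · rintro ⟨⟨b⟩, rfl⟩
      cases b
      · exact Or.inl rfl
      · exact Or.inr rfl
    · rintro (rfl | rfl)
      · exact ⟨⟨false⟩, rfl⟩
      · exact ⟨⟨true⟩, rfl⟩
  rw [hL] at tl
  show A.β (pairEl hκ (A.α (T.map (TypeCat.ofHom f) p)) (A.α (T.map (TypeCat.ofHom g) p))) = A.α (T.map (TypeCat.ofHom g) p)
  exact (A.beta_congr hR).symm.trans tl.symm

theorem TensorAlg.subset_TClosure (Y : Set A.carrier) : Y ⊆ A.TClosure Y :=
  fun _ ha _ hs => hs.1 ha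

theorem TensorAlg.TClosure_subset {Y s : Set A.carrier} (h1 : Y ⊆ s)
    (h2 : ∀ m : T.obj s, A.α (T.map (TypeCat.ofHom (Subtype.val : s → A.carrier)) m) ∈ s) :
    A.TClosure Y ⊆ s := fun _ ha => ha s ⟨h1, h2⟩

theorem TensorAlg.TClosure_closed (Y : Set A.carrier)
    (m : T.obj (A.TClosure Y)) :
    A.α (T.map (TypeCat.ofHom (Subtype.val : A.TClosure Y → A.carrier)) m) ∈ A.TClosure Y := by
  rintro s ⟨h1, h2⟩
  let incl : ↥(A.TClosure Y) → ↥s :=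
    fun a => ⟨a.1, a.2 s ⟨h1, h2⟩⟩
  have e : T.map (TypeCat.ofHom (Subtype.val : ↥s → A.carrier)) (T.map (TypeCat.ofHom incl) m)
      = T.map (TypeCat.ofHom (Subtype.val : ↥(A.TClosure Y) → A.carrier)) m :=
    (ConcreteCategory.congr_hom (T.toFunctor.map_comp (TypeCat.ofHom incl) (TypeCat.ofHom (Subtype.val : ↥s → A.carrier))) m).symm
  rw [← e]
  exact h2 (T.map (TypeCat.ofHom incl) m)

theorem TensorAlg.TClosure_mono {Y Y' : Set A.carrier} (h : Y ⊆ Y') :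
    A.TClosure Y ⊆ A.TClosure Y' :=
  A.TClosure_subset (h.trans (A.subset_TClosure Y')) (A.TClosure_closed Y')

theorem TensorAlg.mem_PImage_of_mem {Y : Set A.carrier} {a : A.carrier} (ha : a ∈ Y) :
    a ∈ A.PImage Y :=
  ⟨PstarObj.eta hκ a, Set.singleton_subset_iff.mpr ha, A.β_unit a⟩

end Aux

/-- Lemma 4.2: with `X₀ = X̂`, `X_{n+1} = P``(T``X_n)` and `X_ω = ⋃ₙ X_n`, every
element of `P``X_ω` is a countable join `⋁_{n ≥ 1} x_n` with `x_n ∈ X_n`. -/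
theorem mem_PImage_eq_countable_join {κ : Cardinal.{u}} (hκ : κ.IsRegular)
    (hunc : Cardinal.aleph0 < κ) (T : Monad (Type u))
    (A : TensorAlg T (Pstar κ hκ)) (Xhat : Set A.carrier) (hgen : A.GeneratedBy Xhat)
    (Xseq : ℕ → Set A.carrier) (h0 : Xseq 0 = Xhat)
    (hsucc : ∀ n : ℕ, Xseq (n + 1) = A.PImage (A.TClosure (Xseq n)))
    (x : A.carrier) (hx : x ∈ A.PImage (⋃ n : ℕ, Xseq n)) :
    ∃ xs : ℕ → A.carrier, (∀ n : ℕ, 1 ≤ n → xs n ∈ Xseq n) ∧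
      x = A.β ⟨xs '' {n : ℕ | 1 ≤ n},
        ⟨xs 1, Set.mem_image_of_mem xs (by norm_num)⟩,
        by
          have hc : (xs '' {n : ℕ | 1 ≤ n}).Countable :=
            (Set.to_countable _).image xs
          have := hc.to_subtype
          exact lt_of_le_of_lt Cardinal.mk_le_aleph0 hunc⟩ := by
  classical
  obtain ⟨s, hs_sub, hs_eq⟩ := hx
  -- Step 1: by generation, there is `c ∈ T``X̂` with `c ≤ x`.
  set G : Set A.carrier := {b | ∃ c ∈ A.TClosure Xhat, A.le c b} with hGdef
  have hGclosed : A.Closed G := by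
    constructor
    · intro m
      have hy : ∀ y : G, ∃ c ∈ A.TClosure Xhat, A.le c y.1 := fun y => y.2
      choose w hw1 hw2 using hy
      let wincl : ↥G → ↥(A.TClosure Xhat) := fun y => ⟨w y, hw1 y⟩
      have hc₀ : T.map (TypeCat.ofHom (Subtype.val : ↥(A.TClosure Xhat) → A.carrier)) (T.map (TypeCat.ofHom wincl) m)
          = T.map (TypeCat.ofHom w) m :=
        (ConcreteCategory.congr_hom (T.toFunctor.map_comp (TypeCat.ofHom wincl)
          (TypeCat.ofHom (Subtype.val : ↥(A.TClosure Xhat) → A.carrier))) m).symm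
      show ∃ c ∈ A.TClosure Xhat, A.le c (A.α (T.map (TypeCat.ofHom (Subtype.val : ↥G → A.carrier)) m))
      refine ⟨A.α (T.map (TypeCat.ofHom (Subtype.val : ↥(A.TClosure Xhat) → A.carrier)) (T.map (TypeCat.ofHom wincl) m)),
        A.TClosure_closed Xhat (T.map (TypeCat.ofHom wincl) m), ?_⟩
      have hmon := A.alpha_mono m w (Subtype.val : ↥G → A.carrier) hw2
      rw [← hc₀] at hmon
      exact hmon
    · intro m
      obtain ⟨y₀, hy₀⟩ := m.2.1
      obtain ⟨c, hc1, hc2⟩ := y₀.2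
      exact ⟨c, hc1, A.le_trans hc2 (A.le_join ⟨y₀, hy₀, rfl⟩)⟩
  have hGuniv : G = Set.univ :=
    hgen G hGclosed (fun b hb => ⟨b, A.subset_TClosure Xhat hb, A.le_refl b⟩)
  have hxG : x ∈ G := hGuniv ▸ Set.mem_univ x
  obtain ⟨c, hcT, hcx⟩ := hxG
  -- Step 2: monotonicity of the sequence.
  have hstep : ∀ n, Xseq n ⊆ Xseq (n + 1) := by
    intro n a ha
    rw [hsucc n]
    exact A.mem_PImage_of_mem (A.subset_TClosure _ ha)
  have hmono : ∀ {m n : ℕ}, m ≤ n → Xseq m ⊆ Xseq n := by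
    intro m n h
    induction h with
    | refl => exact subset_rfl
    | step _ ih => exact ih.trans (hstep _)
  have hc_in : ∀ n, c ∈ A.TClosure (Xseq n) := by
    intro n
    have hXs : Xhat ⊆ Xseq n := by rw [← h0]; exact hmono (Nat.zero_le n)
    exact A.TClosure_mono hXs hcT
  -- Step 3: the pieces.
  have hcard : ∀ n : ℕ, Cardinal.mk ↥((s.1 ∩ Xseq n) ∪ {c}) < κ := by
    intro n
    refine lt_of_le_of_lt (Cardinal.mk_union_le _ _) ?_
    refine Cardinal.add_lt_of_lt hκ.aleph0_le
      (lt_of_le_of_lt (Cardinal.mk_le_mk_of_subset Set.inter_subset_left) s.2.2) ?_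
    rw [Cardinal.mk_singleton]
    exact lt_of_lt_of_le Cardinal.one_lt_aleph0 hκ.aleph0_le
  let U : ℕ → PstarObj κ A.carrier := fun n =>
    ⟨(s.1 ∩ Xseq n) ∪ {c}, ⟨c, Or.inr rfl⟩, hcard n⟩
  refine ⟨fun n => A.β (U (n - 1)), ?_, ?_⟩
  · intro n hn
    obtain ⟨m, rfl⟩ : ∃ m, n = m + 1 := ⟨n - 1, (Nat.succ_pred_eq_of_pos hn).symm⟩
    rw [hsucc m]
    refine ⟨U m, ?_, by show A.β (U m) = A.β (U (m + 1 - 1)); rw [Nat.add_sub_cancel]⟩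
    intro a ha
    rcases ha with h | h
    · exact A.subset_TClosure _ h.2
    · rw [show a = c from h]
      exact hc_in m
  · -- Step 4: the join identity.
    have key : ∀ V : PstarObj κ A.carrier,
        V.1 = (fun n => A.β (U (n - 1))) '' {n : ℕ | 1 ≤ n} → x = A.β V := by
      intro V hV
      -- the outer family
      have hQcard : Cardinal.mk ↥(Set.range U) < κ := by
        have := (Set.countable_range U).to_subtype
        exact lt_of_le_of_lt Cardinal.mk_le_aleph0 hunc
      let Q : PstarObj κ (PstarObj κ A.carrier) := ⟨Set.range U, ⟨U 0, ⟨0, rfl⟩⟩, hQcard⟩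
      have hWcard : Cardinal.mk ↥(s.1 ∪ {c}) < κ := by
        refine lt_of_le_of_lt (Cardinal.mk_union_le _ _) ?_
        refine Cardinal.add_lt_of_lt hκ.aleph0_le s.2.2 ?_
        rw [Cardinal.mk_singleton]
        exact lt_of_lt_of_le Cardinal.one_lt_aleph0 hκ.aleph0_le
      let W : PstarObj κ A.carrier := ⟨s.1 ∪ {c}, ⟨c, Or.inr rfl⟩, hWcard⟩
      have hW : W.1 = ⋃ t ∈ Q.1, t.1 := by
        show s.1 ∪ {c} = ⋃ t ∈ Set.range U, t.1
        ext a
        simp only [Set.biUnion_range]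
        constructor
        · rintro (ha | ha)
          · obtain ⟨_, ⟨n, rfl⟩, han⟩ := hs_sub ha
            exact Set.mem_iUnion.mpr ⟨n, Or.inl ⟨ha, han⟩⟩
          · exact Set.mem_iUnion.mpr ⟨0, Or.inr ha⟩
        · intro ha
          obtain ⟨n, hn⟩ := Set.mem_iUnion.mp ha
          rcases hn with h | h
          · exact Or.inl h.1
          · exact Or.inr h
      have hV' : V.1 = A.β '' Q.1 := by
        rw [hV]
        ext a
        constructor
        · rintro ⟨n, _, rfl⟩
          exact ⟨U (n - 1), ⟨n - 1, rfl⟩, rfl⟩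
        · rintro ⟨_, ⟨m, rfl⟩, rfl⟩
          refine ⟨m + 1, Nat.le_add_left 1 m, ?_⟩
          show A.β (U (m + 1 - 1)) = A.β (U m)
          rw [Nat.add_sub_cancel]
      have h1 : A.β W = A.β V := A.join_eq Q hW hV'
      have h2 : A.β (pairEl hκ (A.β (PstarObj.eta hκ c)) (A.β s)) = A.β W :=
        A.pair_join (by
          show s.1 ∪ {c} = ({c} : Set A.carrier) ∪ s.1
          rw [Set.union_comm])
      have hbuc : A.β (PstarObj.eta hκ c) = c := A.β_unit c
      calc x = A.β (pairEl hκ c x) := hcx.symm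
        _ = A.β (pairEl hκ (A.β (PstarObj.eta hκ c)) (A.β s)) := by rw [hbuc, hs_eq]
        _ = A.β W := h2
        _ = A.β V := h1
    exact key _ rfl
end

section
/- Let κ be a regular uncountable cardinal, T a monad on the category Type u of sets, and (A, α, β) a (P*κ, T)-tensor algebra generated by a subset X̂ ⊆ A. Define X_0 = X̂, X_{n+1} = P``(T``X_n) for n ∈ ℕ, and X_ω = ⋃_{n∈ℕ} X_n. Then P``X_ω is closed under the T-structure, i.e., T``(P``X_ω) ⊆ P``X_ω; consequently A = P``X_ω. -/
open CategoryTheory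

universe u

namespace Aux43

open CategoryTheory

variable {κ : Cardinal.{u}} {hκ : κ.IsRegular} {T : Monad (Type u)}

theorem tmap_comp {X Y Z : Type u} (f : X → Y) (g : Y → Z) (m : T.obj X) :
    T.map (TypeCat.ofHom fun x => g (f x)) m = T.map (TypeCat.ofHom g) (T.map (TypeCat.ofHom f) m) := by
  rw [show (TypeCat.ofHom fun x => g (f x)) = TypeCat.ofHom f ≫ TypeCat.ofHom g from rfl, T.map_comp]
  rfl

def Qnat (hunc : Cardinal.aleph0 < κ) : PstarObj κ (ULift.{u} ℕ) :=
  ⟨Set.univ, ⟨⟨0⟩, trivial⟩, by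
    rw [Cardinal.mk_univ, Cardinal.mk_uLift, Cardinal.mk_nat, Cardinal.lift_aleph0]
    exact hunc⟩

variable (A : TensorAlg T (Pstar κ hκ))

theorem beta_congr {s t : PstarObj κ A.carrier} (h : s.1 = t.1) : A.β s = A.β t :=
  congrArg A.β (Subtype.ext h)

theorem subset_tclosure (Y : Set A.carrier) : Y ⊆ A.TClosure Y :=
  fun _ hx => Set.mem_sInter.2 fun _ hs => hs.1 hx

theorem tclosure_min {Y s : Set A.carrier} (h1 : Y ⊆ s)
    (h2 : ∀ m : T.obj s, A.α (T.map (TypeCat.ofHom (Subtype.val : s → A.carrier)) m) ∈ s) :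
    A.TClosure Y ⊆ s :=
  Set.sInter_subset_of_mem ⟨h1, h2⟩

theorem alpha_mem {B : Set A.carrier} {W : Type u} (g : W → A.carrier)
    (hg : ∀ w, g w ∈ A.TClosure B) (m : T.obj W) :
    A.α (T.map (TypeCat.ofHom g) m) ∈ A.TClosure B := by
  refine Set.mem_sInter.2 fun s hs => ?_
  have hgs : ∀ w, g w ∈ s := fun w => Set.mem_sInter.1 (hg w) s hs
  have he : T.map (TypeCat.ofHom g) m
      = T.map (TypeCat.ofHom (Subtype.val : s → A.carrier)) (T.map (TypeCat.ofHom fun w => (⟨g w, hgs w⟩ : s)) m) :=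
    tmap_comp (fun w => (⟨g w, hgs w⟩ : s)) Subtype.val m
  rw [he]
  exact hs.2 _

def chainObj (hunc : Cardinal.aleph0 < κ) (c : ℕ → A.carrier) : PstarObj κ A.carrier :=
  PstarObj.fmap (fun z : ULift.{u} ℕ => c z.down) (Qnat hunc)

theorem beta_fmap_beta {I : Type u} (S : PstarObj κ I) (g : I → PstarObj κ A.carrier) :
    A.β (PstarObj.fmap (fun i => A.β (g i)) S)
      = A.β (PstarObj.mu hκ (PstarObj.fmap g S)) := by
  have h1 : PstarObj.fmap (fun i => A.β (g i)) S
      = PstarObj.fmap A.β (PstarObj.fmap g S) := by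
    apply Subtype.ext
    simp [PstarObj.fmap_coe, Set.image_image]
    exact (Set.image_image A.β g S.1).symm
  rw [h1]
  exact (A.β_mul (PstarObj.fmap g S)).symm

theorem beta_join_eq {I J : Type u} (SI : PstarObj κ I) (SJ : PstarObj κ J)
    (gi : I → PstarObj κ A.carrier) (gj : J → PstarObj κ A.carrier)
    (hval : (⋃ i ∈ SI.1, (gi i).1) = ⋃ j ∈ SJ.1, (gj j).1) :
    A.β (PstarObj.fmap (fun i => A.β (gi i)) SI)
      = A.β (PstarObj.fmap (fun j => A.β (gj j)) SJ) := by
  rw [beta_fmap_beta A SI gi, beta_fmap_beta A SJ gj]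
  apply beta_congr
  simpa [PstarObj.mu_coe, PstarObj.fmap_coe, Set.biUnion_image] using hval

def Sg (hunc : Cardinal.aleph0 < κ) (g : ℕ → Set A.carrier) : Set A.carrier :=
  {w | ∃ c : ℕ → A.carrier,
    (∀ k, c k ∈ A.TClosure (g k)) ∧ A.β (chainObj A hunc c) = w}

theorem Sg_closed (hunc : Cardinal.aleph0 < κ) (g : ℕ → Set A.carrier)
    (m : T.obj (Sg A hunc g)) :
    A.α (T.map (TypeCat.ofHom (Subtype.val : Sg A hunc g → A.carrier)) m) ∈ Sg A hunc g := by
  have hy : ∀ y : Sg A hunc g, ∃ c : ℕ → A.carrier,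
      (∀ k, c k ∈ A.TClosure (g k)) ∧ A.β (chainObj A hunc c) = y.1 := fun y => y.2
  choose ch hc1 hc2 using hy
  have key : A.α (T.map (TypeCat.ofHom fun y : Sg A hunc g =>
        A.β ((Pstar κ hκ).map (TypeCat.ofHom fun z : ULift.{u} ℕ => ch y z.down) (Qnat hunc))) m)
      = A.β ((Pstar κ hκ).map (TypeCat.ofHom fun z : ULift.{u} ℕ =>
          A.α (T.map (TypeCat.ofHom fun y : Sg A hunc g => ch y z.down) m)) (Qnat hunc)) :=
    A.tensor_law m (Qnat hunc) (fun p => ch p.1 p.2.down)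
  have hfun : (fun y : Sg A hunc g =>
      A.β ((Pstar κ hκ).map (TypeCat.ofHom fun z : ULift.{u} ℕ => ch y z.down) (Qnat hunc)))
      = (Subtype.val : Sg A hunc g → A.carrier) := funext fun y => hc2 y
  rw [hfun] at key
  exact ⟨fun k => A.α (T.map (TypeCat.ofHom fun y : Sg A hunc g => ch y k) m),
    fun k => alpha_mem A (fun y => ch y k) (fun y => hc1 y k) m,
    key.symm⟩

theorem mem_PImage_self {Y : Set A.carrier} {x : A.carrier} (hx : x ∈ Y) :
    x ∈ A.PImage Y :=
  ⟨PstarObj.eta hκ x, by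
    rw [PstarObj.eta_coe]
    exact Set.singleton_subset_iff.2 hx, A.β_unit x⟩

end Aux43
namespace Aux43

variable {κ : Cardinal.{u}} {hκ : κ.IsRegular} {T : Monad (Type u)}
variable (A : TensorAlg T (Pstar κ hκ))

def Gfun (u : PstarObj κ A.carrier) (ch : A.carrier → ℕ → A.carrier) (va : A.carrier) :
    ULift.{u} ℕ → PstarObj κ A.carrier := fun z =>
  match z.down with
  | 0 => PstarObj.eta hκ (ch va 0)
  | (k+1) => PstarObj.fmap (fun v => ch v k) u

section Seq

variable (hunc : Cardinal.aleph0 < κ) (Xseq : ℕ → Set A.carrier)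
variable (hsucc : ∀ n : ℕ, Xseq (n + 1) = A.PImage (A.TClosure (Xseq n)))
include hsucc

theorem tclosure_sub_next (n : ℕ) : A.TClosure (Xseq n) ⊆ Xseq (n + 1) := by
  rw [hsucc n]
  exact fun v hv => mem_PImage_self A hv

theorem xseq_mono {m n : ℕ} (h : m ≤ n) : Xseq m ⊆ Xseq n := by
  induction h with
  | refl => exact fun _ hx => hx
  | @step p hp ih =>
      exact fun x hx => tclosure_sub_next A Xseq hsucc p (subset_tclosure A _ (ih hx))

theorem xseq_sub_Sg (n : ℕ) :
    Xseq n ⊆ Sg A hunc (fun k => Xseq (k + 1)) := by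
  classical
  induction n with
  | zero =>
      intro x hx
      refine ⟨fun _ => x, fun k => subset_tclosure A _
        (xseq_mono A Xseq hsucc (Nat.zero_le (k + 1)) hx), ?_⟩
      have h1 : chainObj A hunc (fun _ => x) = PstarObj.eta hκ x := by
        apply Subtype.ext
        rw [PstarObj.eta_coe]
        simp [chainObj, PstarObj.fmap_coe, Qnat]
        show (fun _ : ULift.{u} ℕ => x) '' Set.univ = {x}
        simp
      rw [h1]
      exact A.β_unit x
  | succ n ih =>
      intro x hx
      rw [hsucc n] at hx
      obtain ⟨u, hu, hux⟩ := hx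
      have husub : ∀ v ∈ u.1, v ∈ Sg A hunc (fun k => Xseq (k + 1)) :=
        fun v hv => tclosure_min A ih (Sg_closed A hunc _) (hu hv)
      have hch : ∀ v : A.carrier, ∃ c : ℕ → A.carrier,
          v ∈ Sg A hunc (fun k => Xseq (k + 1)) →
            (∀ k, c k ∈ A.TClosure (Xseq (k + 1))) ∧ A.β (chainObj A hunc c) = v := by
        intro v
        by_cases hv : v ∈ Sg A hunc (fun k => Xseq (k + 1))
        · obtain ⟨c, hc⟩ := hv
          exact ⟨c, fun _ => hc⟩
        · exact ⟨fun _ => v, fun h => absurd h hv⟩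
      choose ch hchp using hch
      obtain ⟨va, hva⟩ := u.2.1
      refine ⟨fun k => A.β (Gfun A u ch va ⟨k⟩), ?_, ?_⟩
      · intro k
        match k with
        | 0 =>
            show A.β (Gfun A u ch va ⟨0⟩) ∈ A.TClosure (Xseq 1)
            have h0 : A.β (Gfun A u ch va ⟨0⟩) = ch va 0 := A.β_unit (ch va 0)
            rw [h0]
            exact (hchp va (husub va hva)).1 0
        | (k+1) =>
            show A.β (Gfun A u ch va ⟨k+1⟩) ∈ A.TClosure (Xseq (k + 2))
            apply subset_tclosure A _
            show A.β (Gfun A u ch va ⟨k+1⟩) ∈ Xseq (k + 2)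
            rw [hsucc (k + 1)]
            refine ⟨PstarObj.fmap (fun v => ch v k) u, ?_, rfl⟩
            rintro w ⟨v, hv, rfl⟩
            exact (hchp v (husub v hv)).1 k
      · show A.β (PstarObj.fmap
            (fun z : ULift.{u} ℕ => A.β (Gfun A u ch va z)) (Qnat hunc)) = x
        refine (beta_join_eq A (Qnat hunc) u (Gfun A u ch va)
            (fun v => chainObj A hunc (ch v)) ?_).trans ?_
        · ext w
          simp only [Set.mem_iUnion, exists_prop]
          constructor
          · rintro ⟨⟨(_ | k)⟩, -, hz⟩
            · rw [show Gfun A u ch va ⟨0⟩ = PstarObj.eta hκ (ch va 0) from rfl,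
                PstarObj.eta_coe, Set.mem_singleton_iff] at hz
              refine ⟨va, hva, ?_⟩
              show w ∈ (fun z : ULift.{u} ℕ => ch va z.down) '' Set.univ
              exact ⟨⟨0⟩, trivial, hz.symm⟩
            · rw [show Gfun A u ch va ⟨k+1⟩ = PstarObj.fmap (fun v => ch v k) u from rfl,
                PstarObj.fmap_coe] at hz
              obtain ⟨v, hv, rfl⟩ := hz
              refine ⟨v, hv, ?_⟩
              show _ ∈ (fun z : ULift.{u} ℕ => ch v z.down) '' Set.univ
              exact ⟨⟨k⟩, trivial, rfl⟩
          · rintro ⟨v, hv, hw⟩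
            replace hw : w ∈ (fun z : ULift.{u} ℕ => ch v z.down) '' Set.univ := hw
            obtain ⟨z, -, rfl⟩ := hw
            refine ⟨⟨z.down + 1⟩, trivial, ?_⟩
            show _ ∈ (PstarObj.fmap (fun v => ch v z.down) u).1
            rw [PstarObj.fmap_coe]
            exact ⟨v, hv, rfl⟩
        · have himg : PstarObj.fmap (fun v => A.β (chainObj A hunc (ch v))) u = u := by
            apply Subtype.ext
            rw [PstarObj.fmap_coe]
            rw [Set.image_congr (g := id) (fun v hv => (hchp v (husub v hv)).2)]
            exact Set.image_id _
          rw [himg, hux]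

end Seq
end Aux43
namespace Aux43

variable {κ : Cardinal.{u}} {hκ : κ.IsRegular} {T : Monad (Type u)}
variable (A : TensorAlg T (Pstar κ hκ))
variable (hunc : Cardinal.aleph0 < κ) (Xseq : ℕ → Set A.carrier)
variable (hsucc : ∀ n : ℕ, Xseq (n + 1) = A.PImage (A.TClosure (Xseq n)))
include hsucc

theorem D_sub_Sg :
    A.PImage (⋃ n : ℕ, Xseq n) ⊆ Sg A hunc (fun k => Xseq (k + 2)) := by
  classical
  intro y hy
  obtain ⟨u, hu, huy⟩ := hy
  have husub : ∀ v ∈ u.1, v ∈ Sg A hunc (fun k => Xseq (k + 1)) := by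
    intro v hv
    obtain ⟨n, hn⟩ := Set.mem_iUnion.1 (hu hv)
    exact xseq_sub_Sg A hunc Xseq hsucc n hn
  have hch : ∀ v : A.carrier, ∃ c : ℕ → A.carrier,
      v ∈ Sg A hunc (fun k => Xseq (k + 1)) →
        (∀ k, c k ∈ A.TClosure (Xseq (k + 1))) ∧ A.β (chainObj A hunc c) = v := by
    intro v
    by_cases hv : v ∈ Sg A hunc (fun k => Xseq (k + 1))
    · obtain ⟨c, hc⟩ := hv
      exact ⟨c, fun _ => hc⟩
    · exact ⟨fun _ => v, fun h => absurd h hv⟩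
  choose ch hchp using hch
  refine ⟨fun k => A.β (PstarObj.fmap (fun v => ch v k) u), ?_, ?_⟩
  · intro k
    show A.β (PstarObj.fmap (fun v => ch v k) u) ∈ A.TClosure (Xseq (k + 2))
    apply subset_tclosure A _
    rw [hsucc (k + 1)]
    refine ⟨PstarObj.fmap (fun v => ch v k) u, ?_, rfl⟩
    rintro w ⟨v, hv, rfl⟩
    exact (hchp v (husub v hv)).1 k
  · show A.β (PstarObj.fmap (fun z : ULift.{u} ℕ =>
        A.β (PstarObj.fmap (fun v => ch v z.down) u)) (Qnat hunc)) = y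
    refine (beta_join_eq A (Qnat hunc) u
        (fun z => PstarObj.fmap (fun v => ch v z.down) u)
        (fun v => chainObj A hunc (ch v)) ?_).trans ?_
    · ext w
      simp only [Set.mem_iUnion, exists_prop]
      constructor
      · rintro ⟨z, -, hz⟩
        rw [PstarObj.fmap_coe] at hz
        obtain ⟨v, hv, rfl⟩ := hz
        refine ⟨v, hv, ?_⟩
        show _ ∈ (fun z : ULift.{u} ℕ => ch v z.down) '' Set.univ
        exact ⟨z, trivial, rfl⟩
      · rintro ⟨v, hv, hw⟩
        replace hw : w ∈ (fun z : ULift.{u} ℕ => ch v z.down) '' Set.univ := hw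
        obtain ⟨z, -, rfl⟩ := hw
        refine ⟨z, trivial, ?_⟩
        show _ ∈ (PstarObj.fmap (fun v => ch v z.down) u).1
        rw [PstarObj.fmap_coe]
        exact ⟨v, hv, rfl⟩
    · have himg : PstarObj.fmap (fun v => A.β (chainObj A hunc (ch v))) u = u := by
        apply Subtype.ext
        rw [PstarObj.fmap_coe]
        rw [Set.image_congr (g := id) (fun v hv => (hchp v (husub v hv)).2)]
        exact Set.image_id _
      rw [himg, huy]

end Aux43
/-- Lemma 4.3: with `X₀ = X̂`, `X_{n+1} = P``(T``X_n)` and `X_ω = ⋃ₙ X_n`, the set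
`P``X_ω` is closed under the `T`-structure, and consequently is the whole algebra. -/
theorem PImage_closed_and_univ {κ : Cardinal.{u}} (hκ : κ.IsRegular)
    (hunc : Cardinal.aleph0 < κ) (T : Monad (Type u))
    (A : TensorAlg T (Pstar κ hκ)) (Xhat : Set A.carrier) (hgen : A.GeneratedBy Xhat)
    (Xseq : ℕ → Set A.carrier) (h0 : Xseq 0 = Xhat)
    (hsucc : ∀ n : ℕ, Xseq (n + 1) = A.PImage (A.TClosure (Xseq n))) :
    A.TClosure (A.PImage (⋃ n : ℕ, Xseq n)) ⊆ A.PImage (⋃ n : ℕ, Xseq n) ∧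
      A.PImage (⋃ n : ℕ, Xseq n) = Set.univ := by
  classical
  have alphaD : ∀ m : T.obj (A.PImage (⋃ n : ℕ, Xseq n)),
      A.α (T.map (TypeCat.ofHom (Subtype.val : (A.PImage (⋃ n : ℕ, Xseq n) : Set A.carrier) → A.carrier)) m)
        ∈ A.PImage (⋃ n : ℕ, Xseq n) := by
    intro m
    have hsub : ∀ y : (A.PImage (⋃ n : ℕ, Xseq n) : Set A.carrier),
        y.1 ∈ Aux43.Sg A hunc (fun k => Xseq (k + 2)) :=
      fun y => Aux43.D_sub_Sg A hunc Xseq hsucc y.2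
    have he : T.map (TypeCat.ofHom (Subtype.val : (A.PImage (⋃ n : ℕ, Xseq n) : Set A.carrier) → A.carrier)) m
        = T.map (TypeCat.ofHom Subtype.val)
            (T.map (TypeCat.ofHom fun y => (⟨y.1, hsub y⟩ :
              (Aux43.Sg A hunc (fun k => Xseq (k + 2)) : Set A.carrier))) m) :=
      Aux43.tmap_comp (fun y => (⟨y.1, hsub y⟩ :
        (Aux43.Sg A hunc (fun k => Xseq (k + 2)) : Set A.carrier))) Subtype.val m
    rw [he]
    obtain ⟨c, hc1, hc2⟩ := Aux43.Sg_closed A hunc (fun k => Xseq (k + 2)) (T.map _ m)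
    refine ⟨Aux43.chainObj A hunc c, ?_, hc2⟩
    intro w hw
    replace hw : w ∈ (fun z : ULift.{u} ℕ => c z.down) '' Set.univ := hw
    obtain ⟨z, -, rfl⟩ := hw
    exact Set.mem_iUnion.2 ⟨z.down + 3,
      Aux43.tclosure_sub_next A Xseq hsucc (z.down + 2) (hc1 z.down)⟩
  have betaD : ∀ m : (Pstar κ hκ).obj (A.PImage (⋃ n : ℕ, Xseq n) : Set A.carrier),
      A.β ((Pstar κ hκ).map (TypeCat.ofHom Subtype.val) m) ∈ A.PImage (⋃ n : ℕ, Xseq n) := by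
    intro m
    have hy : ∀ y : (A.PImage (⋃ n : ℕ, Xseq n) : Set A.carrier),
        ∃ s : PstarObj κ A.carrier, s.1 ⊆ (⋃ n : ℕ, Xseq n) ∧ A.β s = y.1 := fun y => y.2
    choose U h1 h2 using hy
    have e1 : (Pstar κ hκ).map (TypeCat.ofHom Subtype.val) m
        = PstarObj.fmap (fun y => A.β (U y)) m := by
      apply Subtype.ext
      exact (Set.image_congr fun y _ => (h2 y).symm)
    rw [e1, Aux43.beta_fmap_beta A m U]
    refine ⟨PstarObj.mu hκ (PstarObj.fmap U m), ?_, rfl⟩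
    intro w hw
    rw [PstarObj.mu_coe] at hw
    simp only [PstarObj.fmap_coe, Set.mem_iUnion, exists_prop] at hw
    obtain ⟨t, ⟨y, hy', rfl⟩, hwt⟩ := hw
    exact h1 y hwt
  have hXD : Xhat ⊆ A.PImage (⋃ n : ℕ, Xseq n) := by
    intro x hx
    exact Aux43.mem_PImage_self A (Set.mem_iUnion.2 ⟨0, by rw [h0]; exact hx⟩)
  have hDuniv : A.PImage (⋃ n : ℕ, Xseq n) = Set.univ :=
    hgen _ ⟨alphaD, betaD⟩ hXD
  refine ⟨?_, hDuniv⟩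
  rw [hDuniv]
  exact Set.subset_univ _
end
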